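/- arXiv:2307.15702 — 10 statements merged into one kernel-verified Lean document; each statement's English description precedes it below -/
import Mathlib

section
/- Let A* be the set of strong arcs of a non-Eulerian vote graph. For each a ∈ A*, let x^a be a maximum circulation with x^a_a < q_a, and let x* be the average of the x^a over a ∈ A*. Then x* is a maximum circulation and the set of arcs not saturated by x* equals A*. -/
open Finset

/-- `x` is a circulation on the arc set `A` with capacities `q`. -/
def IsCirculation {V : Type*} [Fintype V] [DecidableEq V]
    (A : Finset (V × V)) (q x : V × V → ℝ) : Prop :=
  (∀ a ∈ A, 0 ≤ x a ∧ x a ≤ q a) ∧ (∀ a, a ∉ A → x a = 0) ∧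
  ∀ i : V, ∑ a ∈ A.filter (fun a => a.1 = i), x a
         = ∑ a ∈ A.filter (fun a => a.2 = i), x a

/-- `x` is a maximum circulation: it maximizes total flow. -/
def IsMaxCirculation {V : Type*} [Fintype V] [DecidableEq V]
    (A : Finset (V × V)) (q x : V × V → ℝ) : Prop :=
  IsCirculation A q x ∧
  ∀ y, IsCirculation A q y → ∑ a ∈ A, y a ≤ ∑ a ∈ A, x a

/-- The residual (remaining-votes) relation: arcs of `A` not saturated by `x`. -/
def residRel {V : Type*} [Fintype V] [DecidableEq V]
    (A : Finset (V × V)) (q x : V × V → ℝ) (i j : V) : Prop :=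
  (i, j) ∈ A ∧ x (i, j) < q (i, j)

/-- A relation is acyclic if it has no directed cycle. -/
def Acyclic {V : Type*} (r : V → V → Prop) : Prop :=
  ∀ i, ¬ Relation.TransGen r i i

/-- The set of arcs of `A` left unsaturated by `x`. -/
noncomputable def unsat {V : Type*} [Fintype V] [DecidableEq V]
    (A : Finset (V × V)) (q x : V × V → ℝ) : Finset (V × V) :=
  A.filter (fun a => x a < q a)

/-- An arc is strong if some maximum circulation leaves it unsaturated. -/
def IsStrongArc {V : Type*} [Fintype V] [DecidableEq V]
    (A : Finset (V × V)) (q : V × V → ℝ) (a : V × V) : Prop :=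
  a ∈ A ∧ ∃ x, IsMaxCirculation A q x ∧ x a < q a

/-- A strong maximum circulation: a maximum circulation leaving as many arcs
unsaturated as possible. -/
def IsStrongMaxCirculation {V : Type*} [Fintype V] [DecidableEq V]
    (A : Finset (V × V)) (q x : V × V → ℝ) : Prop :=
  IsMaxCirculation A q x ∧
  ∀ y, IsMaxCirculation A q y → (unsat A q y).card ≤ (unsat A q x).card

/-- Strong complementary slackness between a circulation `x` and node
potentials `y`. -/
def StrongCS {V : Type*} [Fintype V] [DecidableEq V]
    (A : Finset (V × V)) (q x : V × V → ℝ) (y : V → ℝ) : Prop :=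
  ∀ a ∈ A,
    (x a = 0 → 1 - y a.1 + y a.2 ≤ 0) ∧
    (0 < x a → x a < q a → 1 - y a.1 + y a.2 = 0) ∧
    (x a = q a → 0 < 1 - y a.1 + y a.2)

/-- The vote graph is Eulerian: capacity balance holds at every node. -/
def Eulerian {V : Type*} [Fintype V] [DecidableEq V]
    (A : Finset (V × V)) (q : V × V → ℝ) : Prop :=
  ∀ i : V, ∑ a ∈ A.filter (fun a => a.1 = i), q a
         = ∑ a ∈ A.filter (fun a => a.2 = i), q a

/-- the average of maximum circulations `x^a` (each leaving strong
arc `a` unsaturated) over the strong arcs `A*` is a maximum circulation whose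
set of unsaturated arcs is exactly `A*`. -/
theorem average_over_strong_arcs
    {V : Type*} [Fintype V] [DecidableEq V]
    (A Astar : Finset (V × V)) (q : V × V → ℝ)
    (hqpos : ∀ a ∈ A, 0 < q a)
    (hAstar : ∀ a, a ∈ Astar ↔ IsStrongArc A q a)
    (hne : Astar.Nonempty)
    (x : V × V → V × V → ℝ)
    (hx : ∀ a ∈ Astar, IsMaxCirculation A q (x a) ∧ x a a < q a) :
    IsMaxCirculation A q (fun b => (∑ a ∈ Astar, x a b) / Astar.card) ∧
    unsat A q (fun b => (∑ a ∈ Astar, x a b) / Astar.card) = Astar := by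
  have hn : (0:ℝ) < (Astar.card : ℝ) := by exact_mod_cast Finset.card_pos.mpr hne
  have hcirc : ∀ a ∈ Astar, IsCirculation A q (x a) := fun a ha => (hx a ha).1.1
  have havg : IsCirculation A q (fun b => (∑ a ∈ Astar, x a b) / Astar.card) := by
    refine ⟨fun b hb => ⟨?_, ?_⟩, fun b hb => ?_, fun i => ?_⟩
    · exact div_nonneg (Finset.sum_nonneg fun a ha => ((hcirc a ha).1 b hb).1) hn.le
    · rw [div_le_iff₀ hn]
      calc ∑ a ∈ Astar, x a b ≤ ∑ _a ∈ Astar, q b :=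
            Finset.sum_le_sum fun a ha => ((hcirc a ha).1 b hb).2
        _ = q b * (Astar.card : ℝ) := by rw [Finset.sum_const, nsmul_eq_mul]; ring
    · show (∑ a ∈ Astar, x a b) / (Astar.card : ℝ) = 0
      rw [Finset.sum_eq_zero fun a ha => (hcirc a ha).2.1 b hb, zero_div]
    · rw [← Finset.sum_div, ← Finset.sum_div]
      congr 1
      rw [Finset.sum_comm]
      conv_rhs => rw [Finset.sum_comm]
      exact Finset.sum_congr rfl fun a ha => (hcirc a ha).2.2 i
  have hmax : IsMaxCirculation A q (fun b => (∑ a ∈ Astar, x a b) / Astar.card) := by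
    refine ⟨havg, fun y hy => ?_⟩
    rw [← Finset.sum_div, Finset.sum_comm, le_div_iff₀ hn]
    calc (∑ b ∈ A, y b) * (Astar.card : ℝ) = ∑ _a ∈ Astar, ∑ b ∈ A, y b := by
          rw [Finset.sum_const, nsmul_eq_mul]; ring
      _ ≤ ∑ a ∈ Astar, ∑ b ∈ A, x a b :=
          Finset.sum_le_sum fun a ha => (hx a ha).1.2 y hy
  refine ⟨hmax, ?_⟩
  ext b
  simp only [unsat, Finset.mem_filter]
  constructor
  · rintro ⟨hbA, hlt⟩
    by_contra hb
    have hall : ∀ a ∈ Astar, x a b = q b := by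
      intro a ha
      rcases lt_or_eq_of_le ((hcirc a ha).1 b hbA).2 with h | h
      · exact absurd ((hAstar b).mpr ⟨hbA, x a, (hx a ha).1, h⟩) hb
      · exact h
    rw [Finset.sum_congr rfl hall, Finset.sum_const, nsmul_eq_mul,
        mul_div_cancel_left₀ _ hn.ne'] at hlt
    exact lt_irrefl _ hlt
  · intro hb
    have hbA : b ∈ A := ((hAstar b).mp hb).1
    refine ⟨hbA, ?_⟩
    rw [div_lt_iff₀ hn]
    calc ∑ a ∈ Astar, x a b < ∑ _a ∈ Astar, q b :=
          Finset.sum_lt_sum (fun a ha => ((hcirc a ha).1 b hbA).2)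
            ⟨b, hb, (hx b hb).2⟩
      _ = q b * (Astar.card : ℝ) := by rw [Finset.sum_const, nsmul_eq_mul]; ring
end

section
/- The strong subgraph A* of a vote graph, consisting of all arcs that are unsaturated in some maximum circulation, is acyclic. -/
open Finset

lemma indic_sum {V : Type*} [DecidableEq V] (A : Finset (V × V)) (p : V × V → Prop)
    [DecidablePred p] (e : V × V) (he : e ∈ A) :
    (∑ a ∈ A.filter p, ((if a = e then (1:ℕ) else 0) : ℤ)) = if p e then 1 else 0 := by
  rw [show (fun a => ((if a = e then (1:ℕ) else 0) : ℤ))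
      = fun a => if a = e then ((1:ℕ):ℤ) else 0 from by funext a; split <;> simp]
  rw [Finset.sum_ite_eq' (A.filter p) e (fun _ => ((1:ℕ) : ℤ))]
  simp [Finset.mem_filter, he]

lemma exists_nat_flow {V : Type*} [Fintype V] [DecidableEq V]
    (A : Finset (V × V)) (r : V → V → Prop)
    (hr : ∀ i j, r i j → (i, j) ∈ A) {i j : V}
    (h : Relation.TransGen r i j) :
    ∃ m : V × V → ℕ,
      (∀ a, m a ≠ 0 → r a.1 a.2) ∧ (∃ a ∈ A, m a ≠ 0) ∧
      ∀ k : V,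
        (∑ a ∈ A.filter (fun a => a.1 = k), (m a : ℤ))
          - ∑ a ∈ A.filter (fun a => a.2 = k), (m a : ℤ)
        = (if i = k then 1 else 0) - (if j = k then 1 else 0) := by
  induction h with
  | single hij =>
    rename_i c
    refine ⟨fun a => if a = (i, c) then 1 else 0, ?_, ⟨(i, c), hr _ _ hij, by simp⟩, ?_⟩
    · intro a ha
      have hae : a = (i, c) := by by_contra hne; simp [hne] at ha
      subst hae; exact hij
    · intro k
      have h1 := indic_sum A (fun a => a.1 = k) (i, c) (hr _ _ hij)
      have h2 := indic_sum A (fun a => a.2 = k) (i, c) (hr _ _ hij)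
      simp only [apply_ite (Nat.cast : ℕ → ℤ), Nat.cast_one, Nat.cast_zero] at h1 h2 ⊢
      rw [h1, h2]
  | tail hib hbc ih =>
    rename_i b c
    obtain ⟨m, hsupp, ⟨a0, ha0A, ha0⟩, hdiv⟩ := ih
    refine ⟨fun a => m a + (if a = (b, c) then 1 else 0), ?_,
      ⟨(b, c), hr _ _ hbc, by simp⟩, ?_⟩
    · intro a ha
      by_cases hae : a = (b, c)
      · subst hae; exact hbc
      · exact hsupp a (by simpa [hae] using ha)
    · intro k
      have h1 := indic_sum A (fun a => a.1 = k) (b, c) (hr _ _ hbc)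
      have h2 := indic_sum A (fun a => a.2 = k) (b, c) (hr _ _ hbc)
      have hd := hdiv k
      simp only [apply_ite (Nat.cast : ℕ → ℤ), Nat.cast_one, Nat.cast_zero] at h1 h2 ⊢
      push_cast [Finset.sum_add_distrib]
      rw [h1, h2]
      linarith [hd]

/-- the strong subgraph `A*` is acyclic. -/
theorem strong_subgraph_acyclic
    {V : Type*} [Fintype V] [DecidableEq V]
    (A : Finset (V × V)) (q : V × V → ℝ)
    (hqpos : ∀ a ∈ A, 0 < q a) :
    Acyclic (fun i j => IsStrongArc A q (i, j)) := by
  intro i hi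
  have hrA : ∀ p p', IsStrongArc A q (p, p') → (p, p') ∈ A := fun p p' h => h.1
  obtain ⟨m, hsupp, ⟨a0, ha0A, ha0⟩, hdiv⟩ := exists_nat_flow A _ hrA hi
  -- the divergence of m is zero everywhere
  have hdiv0 : ∀ k, (∑ a ∈ A.filter (fun a => a.1 = k), (m a : ℤ))
      = ∑ a ∈ A.filter (fun a => a.2 = k), (m a : ℤ) := by
    intro k; have := hdiv k; omega
  -- support of m
  set S : Finset (V × V) := A.filter (fun a => m a ≠ 0) with hSdef
  have hmemS : ∀ a, a ∈ S ↔ (a ∈ A ∧ m a ≠ 0) := by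
    intro a; simp [hSdef]
  have ha0S : a0 ∈ S := (hmemS a0).2 ⟨ha0A, ha0⟩
  have hSstrong : ∀ a ∈ S, IsStrongArc A q a := by
    intro a ha
    have := hsupp a ((hmemS a).1 ha).2
    simpa using this
  obtain ⟨-, x0, hx0max, -⟩ := hSstrong a0 ha0S
  -- choose for each arc a maximum circulation unsaturating it
  have hex : ∀ b : V × V, ∃ x, IsMaxCirculation A q x ∧ (b ∈ S → x b < q b) := by
    intro b
    by_cases hb : b ∈ S
    · obtain ⟨-, x, hx, hlt⟩ := hSstrong b hb
      exact ⟨x, hx, fun _ => hlt⟩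
    · exact ⟨x0, hx0max, fun h => absurd h hb⟩
  choose X hXmax hXlt using hex
  set n : ℕ := S.card with hndef
  have hn : 0 < n := Finset.card_pos.2 ⟨a0, ha0S⟩
  have hnR : (0:ℝ) < n := by exact_mod_cast hn
  set xbar : V × V → ℝ := fun a => (∑ b ∈ S, X b a) / n with hxbar
  -- basic facts about xbar
  have hub : ∀ a ∈ A, ∀ b ∈ S, X b a ≤ q a := fun a ha b _ => ((hXmax b).1.1 a ha).2
  have hlb : ∀ a ∈ A, ∀ b ∈ S, 0 ≤ X b a := fun a ha b _ => ((hXmax b).1.1 a ha).1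
  have hxbar_bounds : ∀ a ∈ A, 0 ≤ xbar a ∧ xbar a ≤ q a := by
    intro a ha
    constructor
    · exact div_nonneg (Finset.sum_nonneg (hlb a ha)) hnR.le
    · rw [div_le_iff₀ hnR]
      calc ∑ b ∈ S, X b a ≤ ∑ _b ∈ S, q a := Finset.sum_le_sum (hub a ha)
        _ = q a * n := by rw [Finset.sum_const, nsmul_eq_mul]; ring
  have hxbar_zero : ∀ a, a ∉ A → xbar a = 0 := by
    intro a ha
    simp only [hxbar]
    rw [Finset.sum_congr rfl (fun b _ => (hXmax b).1.2.1 a ha)]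
    simp
  have hxbar_cons : ∀ k : V, ∑ a ∈ A.filter (fun a => a.1 = k), xbar a
      = ∑ a ∈ A.filter (fun a => a.2 = k), xbar a := by
    intro k
    simp only [hxbar, ← Finset.sum_div]
    rw [Finset.sum_comm, Finset.sum_comm (s := A.filter (fun a => a.2 = k))]
    rw [Finset.sum_congr rfl (fun b _ => (hXmax b).1.2.2 k)]
  have hxbar_circ : IsCirculation A q xbar := ⟨hxbar_bounds, hxbar_zero, hxbar_cons⟩
  -- xbar has the maximum total value
  have htot : ∀ b ∈ S, ∑ a ∈ A, X b a = ∑ a ∈ A, x0 a := by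
    intro b _
    exact le_antisymm (hx0max.2 _ (hXmax b).1) ((hXmax b).2 _ hx0max.1)
  have hxbar_tot : ∑ a ∈ A, xbar a = ∑ a ∈ A, x0 a := by
    simp only [hxbar, ← Finset.sum_div]
    rw [Finset.sum_comm, Finset.sum_congr rfl htot, Finset.sum_const, nsmul_eq_mul]
    field_simp
    rw [← hndef]; ring
  -- xbar unsaturates every arc of S
  have hunsat : ∀ a ∈ S, xbar a < q a := by
    intro a ha
    have haA : a ∈ A := ((hmemS a).1 ha).1
    have : ∑ b ∈ S, X b a < ∑ _b ∈ S, q a :=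
      Finset.sum_lt_sum (fun b hb => hub a haA b hb) ⟨a, ha, hXlt a ha⟩
    rw [Finset.sum_const, nsmul_eq_mul] at this
    rw [hxbar]; rw [div_lt_iff₀ hnR]; linarith [this]
  -- choose epsilon
  set ε : ℝ := S.inf' ⟨a0, ha0S⟩ (fun a => (q a - xbar a) / (m a : ℝ)) with hεdef
  have hmpos : ∀ a ∈ S, (0:ℝ) < (m a : ℝ) := by
    intro a ha
    have := ((hmemS a).1 ha).2
    exact_mod_cast Nat.pos_of_ne_zero this
  have hεpos : 0 < ε := by
    rw [hεdef]; refine (Finset.lt_inf'_iff _).2 ?_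
    intro a ha
    exact div_pos (by linarith [hunsat a ha]) (hmpos a ha)
  have hεle : ∀ a ∈ S, ε ≤ (q a - xbar a) / (m a : ℝ) := fun a ha =>
    Finset.inf'_le _ ha
  -- the augmented circulation
  set y : V × V → ℝ := fun a => xbar a + ε * (m a : ℝ) with hydef
  have hmA : ∀ a, a ∉ A → m a = 0 := by
    intro a ha
    by_contra hma
    exact ha (hsupp a hma).1
  have hy_circ : IsCirculation A q y := by
    refine ⟨?_, ?_, ?_⟩
    · intro a ha
      refine ⟨add_nonneg (hxbar_bounds a ha).1 (by positivity), ?_⟩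
      by_cases hma : m a = 0
      · simpa [hydef, hma] using (hxbar_bounds a ha).2
      · have haS : a ∈ S := (hmemS a).2 ⟨ha, hma⟩
        have := (le_div_iff₀ (hmpos a haS)).1 (hεle a haS)
        simp only [hydef]
        linarith
    · intro a ha
      simp [hydef, hxbar_zero a ha, hmA a ha]
    · intro k
      simp only [hydef, Finset.sum_add_distrib, ← Finset.mul_sum]
      have : ∑ a ∈ A.filter (fun a => a.1 = k), (m a : ℝ)
          = ∑ a ∈ A.filter (fun a => a.2 = k), (m a : ℝ) := by
        exact_mod_cast hdiv0 k
      rw [this, hxbar_cons k]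
  -- total value of y exceeds that of xbar : contradiction
  have hy_tot : ∑ a ∈ A, xbar a < ∑ a ∈ A, y a := by
    simp only [hydef, Finset.sum_add_distrib, ← Finset.mul_sum]
    have h1 : (m a0 : ℝ) ≤ ∑ a ∈ A, (m a : ℝ) :=
      Finset.single_le_sum (f := fun a => (m a : ℝ)) (fun a _ => by positivity) ha0A
    have h2 : (0:ℝ) < (m a0 : ℝ) := hmpos a0 ha0S
    have : 0 < ε * ∑ a ∈ A, (m a : ℝ) := mul_pos hεpos (lt_of_lt_of_le h2 h1)
    linarith
  have := hx0max.2 y hy_circ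
  rw [← hxbar_tot] at this
  linarith
end

section
/- Every strong maximum circulation leaves exactly the strong arcs unsaturated: if x' is a maximum circulation maximizing the number of unsaturated arcs, then {a : x'_a < q_a} = A*, the set of strong arcs. Conversely, any maximum circulation x' with {a : x'_a < q_a} = A* is a strong maximum circulation. -/
open Finset

open Classical in
lemma exists_max_unsat_all_strong {V : Type*} [Fintype V] [DecidableEq V]
    (A : Finset (V × V)) (q : V × V → ℝ) (x : V × V → ℝ)
    (hx : IsMaxCirculation A q x) :
    ∃ z, IsMaxCirculation A q z ∧ ∀ a, IsStrongArc A q a → z a < q a := by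
  classical
  set S : Finset (V × V) := A.filter (fun a => IsStrongArc A q a) with hS
  have hmemS : ∀ a, IsStrongArc A q a → a ∈ S := by
    intro a ha; simp [hS, ha.1, ha]
  by_cases hSe : S = ∅
  · refine ⟨x, hx, fun a ha => ?_⟩
    exact absurd (hmemS a ha) (by simp [hSe])
  have hSne : S.Nonempty := Finset.nonempty_iff_ne_empty.2 hSe
  have hn : (0:ℝ) < S.card := by exact_mod_cast Finset.card_pos.2 hSne
  -- witness circulations
  set w : (V × V) → (V × V) → ℝ := fun a =>
    if h : IsStrongArc A q a then h.2.choose else x with hw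
  have hwspec : ∀ a ∈ S, IsMaxCirculation A q (w a) ∧ w a a < q a := by
    intro a ha
    have h : IsStrongArc A q a := (Finset.mem_filter.1 ha).2
    simp only [hw, dif_pos h]
    exact h.2.choose_spec
  set z : (V × V) → ℝ := fun e => (∑ a ∈ S, w a e) / S.card with hz
  have hwcirc : ∀ a ∈ S, IsCirculation A q (w a) := fun a ha => (hwspec a ha).1.1
  -- each w a has the same total as x
  have htot : ∀ a ∈ S, ∑ e ∈ A, w a e = ∑ e ∈ A, x e := by
    intro a ha
    exact le_antisymm (hx.2 _ (hwcirc a ha)) ((hwspec a ha).1.2 _ hx.1)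
  have hzcirc : IsCirculation A q z := by
    refine ⟨fun e he => ⟨?_, ?_⟩, fun e he => ?_, fun i => ?_⟩
    · apply div_nonneg _ hn.le
      exact Finset.sum_nonneg fun a ha => ((hwcirc a ha).1 e he).1
    · rw [div_le_iff₀ hn]
      calc ∑ a ∈ S, w a e ≤ ∑ a ∈ S, q e :=
            Finset.sum_le_sum fun a ha => ((hwcirc a ha).1 e he).2
        _ = q e * S.card := by rw [Finset.sum_const, nsmul_eq_mul, mul_comm]
    · simp only [hz]
      rw [Finset.sum_congr rfl fun a ha => (hwcirc a ha).2.1 e he]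
      simp
    · have L : ∀ (T : Finset (V × V)), ∑ e ∈ T, z e = (∑ a ∈ S, ∑ e ∈ T, w a e) / S.card := by
        intro T; simp only [hz]; rw [← Finset.sum_div, Finset.sum_comm]
      rw [L, L]
      congr 1
      exact Finset.sum_congr rfl fun a ha => (hwcirc a ha).2.2 i
  have hztot : ∑ e ∈ A, z e = ∑ e ∈ A, x e := by
    simp only [hz]
    rw [← Finset.sum_div, Finset.sum_comm]
    rw [Finset.sum_congr rfl htot, Finset.sum_const, nsmul_eq_mul]
    field_simp
  refine ⟨z, ⟨hzcirc, fun y hy => hztot ▸ hx.2 y hy⟩, fun b hb => ?_⟩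
  have hbS := hmemS b hb
  have : ∑ a ∈ S, w a b < ∑ a ∈ S, q b := by
    apply Finset.sum_lt_sum (fun a ha => ((hwcirc a ha).1 b hb.1).2)
    exact ⟨b, hbS, (hwspec b hbS).2⟩
  rw [Finset.sum_const, nsmul_eq_mul] at this
  simp only [hz]
  rw [div_lt_iff₀ hn]
  linarith

/-- a maximum circulation is strong iff its unsaturated arc set is
exactly the set of strong arcs. -/
theorem strong_max_circulation_iff_unsat_eq_strong
    {V : Type*} [Fintype V] [DecidableEq V]
    (A : Finset (V × V)) (q : V × V → ℝ)
    (hqpos : ∀ a ∈ A, 0 < q a) (x' : V × V → ℝ) :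
    (IsStrongMaxCirculation A q x' →
      (↑(unsat A q x') : Set (V × V)) = {a | IsStrongArc A q a}) ∧
    ((IsMaxCirculation A q x' ∧
        (↑(unsat A q x') : Set (V × V)) = {a | IsStrongArc A q a}) →
      IsStrongMaxCirculation A q x') := by
  classical
  set S : Finset (V × V) := A.filter (fun a => IsStrongArc A q a) with hS
  have hScoe : (↑S : Set (V × V)) = {a | IsStrongArc A q a} := by
    ext a
    simp only [hS, Finset.coe_filter, Set.mem_setOf_eq, and_iff_right_iff_imp]
    exact fun h => h.1
  constructor
  · rintro ⟨hxm, hxs⟩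
    obtain ⟨z, hzm, hz⟩ := exists_max_unsat_all_strong A q x' hxm
    have hsub : unsat A q x' ⊆ S := by
      intro a ha
      rw [unsat, Finset.mem_filter] at ha
      simp only [hS, Finset.mem_filter]
      exact ⟨ha.1, ha.1, x', hxm, ha.2⟩
    have hSz : S ⊆ unsat A q z := by
      intro a ha
      have h : IsStrongArc A q a := (Finset.mem_filter.1 ha).2
      rw [unsat, Finset.mem_filter]
      exact ⟨h.1, hz a h⟩
    have hcard : S.card ≤ (unsat A q x').card :=
      le_trans (Finset.card_le_card hSz) (hxs z hzm)
    rw [Finset.eq_of_subset_of_card_le hsub hcard]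
    exact hScoe
  · rintro ⟨hxm, heq⟩
    refine ⟨hxm, fun y hym => Finset.card_le_card fun a ha => ?_⟩
    rw [unsat, Finset.mem_filter] at ha
    have : a ∈ (↑(unsat A q x') : Set (V × V)) := by
      rw [heq]; exact ⟨ha.1, y, hym, ha.2⟩
    exact this
end

section
/- For any two maximum circulations x' and x'' in a vote graph, the partial orders induced by the residual acyclic graphs A(q−x') and A(q−x'') are non-conflicting: there is no pair i, j with a directed path from i to j in A(q−x') and a directed path from j to i in A(q−x''). -/
open Finset

lemma exists_mult {V : Type*} [Fintype V] [DecidableEq V]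
    (A : Finset (V × V)) (q z : V × V → ℝ) {i j : V}
    (h : Relation.TransGen (residRel A q z) i j) :
    ∃ m : V × V → ℝ, (∀ a, 0 ≤ m a) ∧ (∀ a, m a ≠ 0 → a ∈ A ∧ z a < q a) ∧
      (∀ v, ∑ a ∈ A.filter (fun a => a.1 = v), m a
          - ∑ a ∈ A.filter (fun a => a.2 = v), m a
          = (if v = i then (1:ℝ) else 0) - (if v = j then 1 else 0)) ∧
      1 ≤ ∑ a ∈ A, m a := by
  induction h with
  | single h =>
    rename_i b
    refine ⟨fun a => if a = (i, b) then 1 else 0, ?_, ?_, ?_, ?_⟩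
    · intro a; dsimp only; split <;> norm_num
    · intro a ha; dsimp only at ha; split at ha
      · subst_vars; exact ⟨h.1, h.2⟩
      · simp at ha
    · intro v
      rw [Finset.sum_ite_eq', Finset.sum_ite_eq']
      have e1 : ((i, b) ∈ A.filter (fun a => a.1 = v)) ↔ v = i := by
        simp [h.1, eq_comm]
      have e2 : ((i, b) ∈ A.filter (fun a => a.2 = v)) ↔ v = b := by
        simp [h.1, eq_comm]
      rw [if_congr e1 rfl rfl, if_congr e2 rfl rfl]
    · rw [Finset.sum_ite_eq']
      simp [h.1]
  | tail p h ih =>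
    rename_i b c
    obtain ⟨m, hm0, hms, hmd, hm1⟩ := ih
    refine ⟨fun a => m a + (if a = (b, c) then 1 else 0), ?_, ?_, ?_, ?_⟩
    · intro a; have := hm0 a; dsimp only; split <;> linarith
    · intro a ha
      by_cases hab : a = (b, c)
      · subst hab; exact ⟨h.1, h.2⟩
      · apply hms; simpa [hab] using ha
    · intro v
      rw [Finset.sum_add_distrib, Finset.sum_add_distrib,
        Finset.sum_ite_eq', Finset.sum_ite_eq']
      have e1 : ((b, c) ∈ A.filter (fun a => a.1 = v)) ↔ v = b := by
        simp [h.1, eq_comm]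
      have e2 : ((b, c) ∈ A.filter (fun a => a.2 = v)) ↔ v = c := by
        simp [h.1, eq_comm]
      rw [if_congr e1 rfl rfl, if_congr e2 rfl rfl]
      have := hmd v
      split_ifs at this ⊢ <;> linarith
    · rw [Finset.sum_add_distrib, Finset.sum_ite_eq']
      simp only [h.1, if_true]
      linarith

lemma resid_acyclic {V : Type*} [Fintype V] [DecidableEq V]
    (A : Finset (V × V)) (q z : V × V → ℝ)
    (hz : IsMaxCirculation A q z) :
    ∀ i, ¬ Relation.TransGen (residRel A q z) i i := by
  intro i hcyc
  obtain ⟨m, hm0, hms, hmd, hm1⟩ := exists_mult A q z hcyc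
  have hdiv : ∀ v, ∑ a ∈ A.filter (fun a => a.1 = v), m a
      = ∑ a ∈ A.filter (fun a => a.2 = v), m a := by
    intro v; have := hmd v; simp at this; linarith
  set S := A.filter (fun a => m a ≠ 0) with hS
  have hSne : S.Nonempty := by
    by_contra hne
    rw [Finset.not_nonempty_iff_eq_empty] at hne
    have : ∑ a ∈ A, m a = 0 := by
      apply Finset.sum_eq_zero
      intro a ha
      by_contra hma
      have : a ∈ S := Finset.mem_filter.mpr ⟨ha, hma⟩
      simp [hne] at this
    linarith
  set ε := S.inf' hSne (fun a => (q a - z a) / m a) with hε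
  have hεpos : 0 < ε := by
    rw [hε, Finset.lt_inf'_iff]
    intro a ha
    rw [hS, Finset.mem_filter] at ha
    have h1 := hms a ha.2
    have h2 : 0 < m a := lt_of_le_of_ne (hm0 a) (Ne.symm ha.2)
    exact div_pos (by linarith [h1.2]) h2
  have hcirc := hz.1
  set y := fun a => z a + ε * m a with hy
  have hycirc : IsCirculation A q y := by
    refine ⟨?_, ?_, ?_⟩
    · intro a ha
      constructor
      · have h1 := (hcirc.1 a ha).1; have h2 := hm0 a
        simp only [hy]; nlinarith
      · by_cases hma : m a = 0
        · simp [hy, hma]; exact (hcirc.1 a ha).2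
        · have haS : a ∈ S := Finset.mem_filter.mpr ⟨ha, hma⟩
          have hle : ε ≤ (q a - z a) / m a := Finset.inf'_le _ haS
          have h2 : 0 < m a := lt_of_le_of_ne (hm0 a) (Ne.symm hma)
          have : ε * m a ≤ q a - z a := by
            rw [div_eq_mul_inv] at hle
            calc ε * m a ≤ ((q a - z a) * (m a)⁻¹) * m a :=
                  mul_le_mul_of_nonneg_right hle (le_of_lt h2)
              _ = q a - z a := by field_simp
          simp only [hy]; linarith
    · intro a ha
      have h1 := hcirc.2.1 a ha
      have h2 : m a = 0 := by
        by_contra hma; exact ha (hms a hma).1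
      simp [hy, h1, h2]
    · intro v
      simp only [hy, Finset.sum_add_distrib, ← Finset.mul_sum]
      rw [hcirc.2.2 v, hdiv v]
  have hgt : ∑ a ∈ A, z a < ∑ a ∈ A, y a := by
    simp only [hy, Finset.sum_add_distrib, ← Finset.mul_sum]
    nlinarith
  have := hz.2 y hycirc
  linarith


/-- the partial orders induced by removing any two maximum
circulations are non-conflicting. -/
theorem max_circulations_non_conflicting
    {V : Type*} [Fintype V] [DecidableEq V]
    (A : Finset (V × V)) (q : V × V → ℝ)
    (hqpos : ∀ a ∈ A, 0 < q a) (x' x'' : V × V → ℝ)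
    (hx' : IsMaxCirculation A q x') (hx'' : IsMaxCirculation A q x'') :
    ¬ ∃ i j : V, Relation.TransGen (residRel A q x') i j ∧
                 Relation.TransGen (residRel A q x'') j i := by
  rintro ⟨i, j, h1, h2⟩
  set z := fun a => (x' a + x'' a) / 2 with hzdef
  have hc' := hx'.1
  have hc'' := hx''.1
  have hzcirc : IsCirculation A q z := by
    refine ⟨?_, ?_, ?_⟩
    · intro a ha
      have p1 := hc'.1 a ha
      have p2 := hc''.1 a ha
      constructor <;> simp only [hzdef] <;> linarith
    · intro a ha
      simp [hzdef, hc'.2.1 a ha, hc''.2.1 a ha]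
    · intro v
      simp only [hzdef]
      rw [← Finset.sum_div, ← Finset.sum_div,
        Finset.sum_add_distrib, Finset.sum_add_distrib, hc'.2.2 v, hc''.2.2 v]
  have hsum : ∑ a ∈ A, x' a = ∑ a ∈ A, x'' a :=
    le_antisymm (hx''.2 x' hc') (hx'.2 x'' hc'')
  have hzsum : ∑ a ∈ A, z a = ∑ a ∈ A, x' a := by
    simp only [hzdef]
    rw [← Finset.sum_div, Finset.sum_add_distrib, ← hsum]
    ring
  have hzmax : IsMaxCirculation A q z := by
    refine ⟨hzcirc, fun y hy => ?_⟩
    rw [hzsum]; exact hx'.2 y hy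
  have lift' : ∀ {a b : V}, residRel A q x' a b → residRel A q z a b := by
    intro a b hab
    refine ⟨hab.1, ?_⟩
    have := (hc''.1 _ hab.1).2
    have := hab.2
    simp only [hzdef]; linarith
  have lift'' : ∀ {a b : V}, residRel A q x'' a b → residRel A q z a b := by
    intro a b hab
    refine ⟨hab.1, ?_⟩
    have := (hc'.1 _ hab.1).2
    have := hab.2
    simp only [hzdef]; linarith
  have c1 : Relation.TransGen (residRel A q z) i j :=
    Relation.TransGen.mono (fun a b h => lift' h) _ _ h1
  have c2 : Relation.TransGen (residRel A q z) j i :=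
    Relation.TransGen.mono (fun a b h => lift'' h) _ _ h2
  exact resid_acyclic A q z hzmax i (c1.trans c2)
end

section
/- Any strictly positive convex combination of the maximum circulations x^a (a ∈ A*), where x^a is a maximum circulation leaving arc a unsaturated, is a strong maximum circulation. -/
open Finset

/-- a strictly positive convex combination of the maximum
circulations `x^a` (each leaving strong arc `a` unsaturated) is a strong
maximum circulation. -/
theorem strictly_positive_combination_is_strong
    {V : Type*} [Fintype V] [DecidableEq V]
    (A Astar : Finset (V × V)) (q : V × V → ℝ)
    (hqpos : ∀ a ∈ A, 0 < q a)
    (hAstar : ∀ a, a ∈ Astar ↔ IsStrongArc A q a)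
    (hne : Astar.Nonempty)
    (x : V × V → V × V → ℝ)
    (hx : ∀ a ∈ Astar, IsMaxCirculation A q (x a) ∧ x a a < q a)
    (lam : V × V → ℝ)
    (hlampos : ∀ a ∈ Astar, 0 < lam a) (hlam1 : ∑ a ∈ Astar, lam a = 1) :
    IsStrongMaxCirculation A q (fun b => ∑ a ∈ Astar, lam a * x a b) := by
  obtain ⟨a0, ha0⟩ := hne
  set z : V × V → ℝ := fun b => ∑ a ∈ Astar, lam a * x a b with hz
  have hcircs : ∀ a ∈ Astar, IsCirculation A q (x a) := fun a ha => (hx a ha).1.1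
  -- z is a circulation
  have hzcirc : IsCirculation A q z := by
    refine ⟨?_, ?_, ?_⟩
    · intro b hb
      constructor
      · apply Finset.sum_nonneg
        intro a ha
        exact mul_nonneg (hlampos a ha).le (((hcircs a ha).1 b hb).1)
      · calc ∑ a ∈ Astar, lam a * x a b
            ≤ ∑ a ∈ Astar, lam a * q b := by
              apply Finset.sum_le_sum
              intro a ha
              exact mul_le_mul_of_nonneg_left (((hcircs a ha).1 b hb).2) (hlampos a ha).le
          _ = q b := by rw [← Finset.sum_mul, hlam1, one_mul]
    · intro b hb
      apply Finset.sum_eq_zero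
      intro a ha
      rw [(hcircs a ha).2.1 b hb, mul_zero]
    · intro i
      have : ∀ S : Finset (V × V), ∑ b ∈ S, z b = ∑ a ∈ Astar, lam a * ∑ b ∈ S, x a b := by
        intro S
        rw [Finset.sum_comm (s := S) (t := Astar) (f := fun b a => lam a * x a b)]
        simp [Finset.mul_sum]
      rw [this, this]
      apply Finset.sum_congr rfl
      intro a ha
      rw [(hcircs a ha).2.2 i]
  -- total flow of each x a equals that of x a0
  have hval : ∀ a ∈ Astar, ∑ b ∈ A, x a b = ∑ b ∈ A, x a0 b := by
    intro a ha
    exact le_antisymm ((hx a0 ha0).1.2 _ (hcircs a ha))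
      ((hx a ha).1.2 _ (hcircs a0 ha0))
  have hztot : ∑ b ∈ A, z b = ∑ b ∈ A, x a0 b := by
    have : ∀ S : Finset (V × V), ∑ b ∈ S, z b = ∑ a ∈ Astar, lam a * ∑ b ∈ S, x a b := by
      intro S
      rw [Finset.sum_comm (s := S) (t := Astar) (f := fun b a => lam a * x a b)]
      simp [Finset.mul_sum]
    rw [this]
    calc ∑ a ∈ Astar, lam a * ∑ b ∈ A, x a b
        = ∑ a ∈ Astar, lam a * ∑ b ∈ A, x a0 b := by
          apply Finset.sum_congr rfl; intro a ha; rw [hval a ha]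
      _ = ∑ b ∈ A, x a0 b := by rw [← Finset.sum_mul, hlam1, one_mul]
  have hzmax : IsMaxCirculation A q z := by
    refine ⟨hzcirc, ?_⟩
    intro y hy
    rw [hztot]
    exact (hx a0 ha0).1.2 y hy
  refine ⟨hzmax, ?_⟩
  intro y hy
  have h1 : unsat A q y ⊆ Astar := by
    intro b hb
    rw [unsat, Finset.mem_filter] at hb
    exact (hAstar b).2 ⟨hb.1, y, hy, hb.2⟩
  have h2 : Astar ⊆ unsat A q z := by
    intro a ha
    have haA : a ∈ A := ((hAstar a).1 ha).1
    rw [unsat, Finset.mem_filter]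
    refine ⟨haA, ?_⟩
    have : ∑ b ∈ Astar, lam b * x b a < ∑ b ∈ Astar, lam b * q a := by
      apply Finset.sum_lt_sum
      · intro b hb
        exact mul_le_mul_of_nonneg_left (((hcircs b hb).1 a haA).2) (hlampos b hb).le
      · exact ⟨a, ha, by
          exact mul_lt_mul_of_pos_left ((hx a ha).2) (hlampos a ha)⟩
    calc z a < ∑ b ∈ Astar, lam b * q a := this
      _ = q a := by rw [← Finset.sum_mul, hlam1, one_mul]
  exact Finset.card_le_card (h1.trans h2)
end

section
/- Minimizing ∑_{(i,j)∈A} q_ij · max{y_j − y_i + 1, 0} over real node potentials y equals the maximum of ∑ x_ij over circulations x with 0 ≤ x ≤ q (LP duality between the relaxed Kemeny objective and maximum circulation). -/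
open Finset

/-- Weight of a walk given as a list of vertices. -/
noncomputable def pw {V : Type*} (c : V → V → ℝ) : List V → ℝ
  | [] => 0
  | [_] => 0
  | a :: b :: t => c a b + pw c (b :: t)

lemma pw_concat {V : Type*} (c : V → V → ℝ) :
    ∀ (l : List V) (h : l ≠ []) (j : V),
      pw c (l ++ [j]) = pw c l + c (l.getLast h) j
  | [], h, j => absurd rfl h
  | [x], _, j => by simp [pw]
  | x :: y :: t, _, j => by
    have := pw_concat c (y :: t) (List.cons_ne_nil _ _) j
    simp only [List.cons_append, List.append_eq, pw] at this ⊢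
    rw [this, List.getLast_cons (List.cons_ne_nil _ _)]
    ring

lemma pw_split {V : Type*} (c : V → V → ℝ) :
    ∀ (u : List V) (w : V) (v : List V),
      pw c (u ++ w :: v) = pw c (u ++ [w]) + pw c (w :: v)
  | [], w, v => by simp [pw]
  | [x], w, v => by simp [pw]
  | x :: y :: u', w, v => by
    have := pw_split c (y :: u') w v
    simp only [List.cons_append, List.append_eq, pw] at this ⊢
    rw [this]; ring

lemma pw_zip {V : Type*} (c : V → V → ℝ) :
    ∀ (a t : V) (l : List V),
      pw c (a :: (l ++ [t]))
        = (((a :: l).zip (l ++ [t])).map (fun e => c e.1 e.2)).sum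
  | a, t, [] => by simp [pw]
  | a, t, b :: l' => by
    have := pw_zip c b t l'
    simp only [List.cons_append, List.append_eq, pw, List.zip_cons_cons, List.map_cons, List.sum_cons] at this ⊢
    rw [this]

/-- Bellman-Ford style existence of potentials for difference constraints,
given that every simple cycle has nonnegative weight. -/
lemma exists_potential {V : Type*} [Fintype V] [DecidableEq V] (c : V → V → ℝ)
    (hcyc : ∀ (a : V) (l : List V), (a :: l).Nodup → 0 ≤ pw c (a :: (l ++ [a]))) :
    ∃ y : V → ℝ, ∀ i j, y j ≤ y i + c i j := by
  cases isEmpty_or_nonempty V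
  · exact ⟨fun _ => 0, fun i => isEmptyElim i⟩
  classical
  -- paths ending at i
  let T : V → Finset {l : List V // l.Nodup} :=
    fun i => Finset.univ.filter (fun l => l.1.getLast? = some i)
  have hTne : ∀ i, (T i).Nonempty := by
    intro i
    exact ⟨⟨[i], List.nodup_singleton i⟩, by simp [T]⟩
  let y : V → ℝ := fun i => (T i).inf' (hTne i) (fun l => pw c l.1)
  refine ⟨y, fun i j => ?_⟩
  obtain ⟨l, hlmem, hleq⟩ := Finset.exists_mem_eq_inf' (hTne i) (fun l => pw c l.1)
  have hlast : l.1.getLast? = some i := (Finset.mem_filter.1 hlmem).2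
  have hlne : l.1 ≠ [] := by
    intro h; rw [h] at hlast; simp at hlast
  have hlastv : l.1.getLast hlne = i := by
    rw [List.getLast?_eq_getLast_of_ne_nil hlne] at hlast
    exact Option.some_injective _ hlast
  have hkey : pw c (l.1 ++ [j]) = y i + c i j := by
    rw [pw_concat c l.1 hlne j, hlastv]
    have hleq' : y i = pw c l.1 := hleq
    rw [hleq']
  by_cases hj : j ∈ l.1
  · obtain ⟨p, s, hps⟩ := List.append_of_mem hj
    have hnd := l.2
    rw [hps] at hnd
    have hndp : (p ++ [j]).Nodup := by
      have : ((p ++ [j]) ++ s).Nodup := by simpa using hnd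
      exact this.of_append_left
    have hnds : (j :: s).Nodup := hnd.of_append_right
    have hmem : (⟨p ++ [j], hndp⟩ : {l : List V // l.Nodup}) ∈ T j := by
      simp [T, List.getLast?_concat]
    have h1 : y j ≤ pw c (p ++ [j]) := Finset.inf'_le _ hmem
    have h2 : pw c (l.1 ++ [j]) = pw c (p ++ [j]) + pw c (j :: (s ++ [j])) := by
      rw [hps]
      have : (p ++ j :: s) ++ [j] = p ++ j :: (s ++ [j]) := by simp
      rw [this, pw_split c p j (s ++ [j])]
    have h3 : 0 ≤ pw c (j :: (s ++ [j])) := hcyc j s hnds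
    calc y j ≤ pw c (p ++ [j]) := h1
      _ ≤ pw c (l.1 ++ [j]) := by rw [h2]; linarith
      _ = y i + c i j := hkey
  · have hnd' : (l.1 ++ [j]).Nodup := by
      rw [List.nodup_append]
      exact ⟨l.2, List.nodup_singleton j, by simp; intro a ha h; exact hj (h ▸ ha)⟩
    have hmem : (⟨l.1 ++ [j], hnd'⟩ : {l : List V // l.Nodup}) ∈ T j := by
      simp [T, List.getLast?_concat]
    have h1 : y j ≤ pw c (l.1 ++ [j]) := Finset.inf'_le _ hmem
    rw [hkey] at h1; exact h1

lemma circ_pot_zero {V : Type*} [Fintype V] [DecidableEq V]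
    {A : Finset (V × V)} {q x : V × V → ℝ} (hx : IsCirculation A q x) (y : V → ℝ) :
    ∑ a ∈ A, x a * (y a.2 - y a.1) = 0 := by
  have h2 : ∑ a ∈ A, x a * y a.2
      = ∑ i, y i * ∑ a ∈ A.filter (fun a => a.2 = i), x a := by
    rw [← Finset.sum_fiberwise A (fun a => a.2) (fun a => x a * y a.2)]
    refine Finset.sum_congr rfl fun i _ => ?_
    rw [Finset.mul_sum]
    refine Finset.sum_congr rfl fun a ha => ?_
    rw [(Finset.mem_filter.1 ha).2]; ring
  have h1 : ∑ a ∈ A, x a * y a.1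
      = ∑ i, y i * ∑ a ∈ A.filter (fun a => a.1 = i), x a := by
    rw [← Finset.sum_fiberwise A (fun a => a.1) (fun a => x a * y a.1)]
    refine Finset.sum_congr rfl fun i _ => ?_
    rw [Finset.mul_sum]
    refine Finset.sum_congr rfl fun a ha => ?_
    rw [(Finset.mem_filter.1 ha).2]; ring
  have : ∑ a ∈ A, x a * (y a.2 - y a.1)
      = ∑ a ∈ A, x a * y a.2 - ∑ a ∈ A, x a * y a.1 := by
    rw [← Finset.sum_sub_distrib]
    exact Finset.sum_congr rfl fun a _ => by ring
  rw [this, h2, h1, sub_eq_zero]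
  exact Finset.sum_congr rfl fun i _ => by rw [hx.2.2 i]

lemma weak_duality {V : Type*} [Fintype V] [DecidableEq V]
    {A : Finset (V × V)} {q : V × V → ℝ} (hq : ∀ a ∈ A, 0 ≤ q a)
    {x : V × V → ℝ} (hx : IsCirculation A q x) (y : V → ℝ) :
    ∑ a ∈ A, x a ≤ ∑ a ∈ A, q a * max (y a.2 - y a.1 + 1) 0 := by
  have h0 := circ_pot_zero hx y
  have h1 : ∑ a ∈ A, x a = ∑ a ∈ A, x a * (y a.2 - y a.1 + 1) := by
    have : ∑ a ∈ A, x a * (y a.2 - y a.1 + 1)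
        = ∑ a ∈ A, x a * (y a.2 - y a.1) + ∑ a ∈ A, x a := by
      rw [← Finset.sum_add_distrib]
      exact Finset.sum_congr rfl fun a _ => by ring
    rw [this, h0, zero_add]
  rw [h1]
  refine Finset.sum_le_sum fun a ha => ?_
  obtain ⟨hx0, hxq⟩ := hx.1 a ha
  rcases le_total (y a.2 - y a.1 + 1) 0 with h | h
  · have : max (y a.2 - y a.1 + 1) 0 = 0 := max_eq_right h
    rw [this, mul_zero]
    exact mul_nonpos_of_nonneg_of_nonpos hx0 h
  · have : max (y a.2 - y a.1 + 1) 0 = y a.2 - y a.1 + 1 := max_eq_left h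
    rw [this]
    exact mul_le_mul_of_nonneg_right hxq h

lemma exists_max_circ {V : Type*} [Fintype V] [DecidableEq V]
    (A : Finset (V × V)) (q : V × V → ℝ) (hq : ∀ a ∈ A, 0 ≤ q a) :
    ∃ x, IsCirculation A q x ∧
      ∀ z, IsCirculation A q z → ∑ a ∈ A, z a ≤ ∑ a ∈ A, x a := by
  classical
  set C : Set ((V × V) → ℝ) := {x | IsCirculation A q x} with hC
  have h0 : (fun _ => (0:ℝ)) ∈ C := by
    refine ⟨fun a ha => ⟨le_refl _, hq a ha⟩, fun _ _ => rfl, fun i => by simp⟩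
  have hclosed : IsClosed C := by
    have : C = (⋂ a ∈ A, ({x : (V × V) → ℝ | 0 ≤ x a} ∩ {x | x a ≤ q a}))
        ∩ ((⋂ (a : V × V) (_ : a ∉ A), {x : (V × V) → ℝ | x a = 0})
        ∩ ⋂ i : V, {x : (V × V) → ℝ |
            ∑ a ∈ A.filter (fun a => a.1 = i), x a
              = ∑ a ∈ A.filter (fun a => a.2 = i), x a}) := by
      ext x
      simp only [Set.mem_inter_iff, Set.mem_iInter, Set.mem_setOf_eq, hC]
      constructor
      · rintro ⟨h1, h2, h3⟩
        exact ⟨fun a ha => ⟨(h1 a ha).1, (h1 a ha).2⟩, fun a ha => h2 a ha, fun i => h3 i⟩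
      · rintro ⟨h1, h2, h3⟩
        exact ⟨fun a ha => h1 a ha, h2, h3⟩
    rw [this]
    refine IsClosed.inter ?_ (IsClosed.inter ?_ ?_)
    · refine isClosed_biInter fun a _ => IsClosed.inter ?_ ?_
      · exact isClosed_le continuous_const (continuous_apply a)
      · exact isClosed_le (continuous_apply a) continuous_const
    · refine isClosed_iInter fun a => isClosed_iInter fun _ => ?_
      exact isClosed_eq (continuous_apply a) continuous_const
    · refine isClosed_iInter fun i => ?_
      exact isClosed_eq (continuous_finset_sum _ fun a _ => continuous_apply a)
        (continuous_finset_sum _ fun a _ => continuous_apply a)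
  have hsub : C ⊆ Set.Icc (fun _ => (0:ℝ)) (fun a => max (q a) 0) := by
    intro x hx
    constructor
    · intro a
      by_cases ha : a ∈ A
      · exact (hx.1 a ha).1
      · exact le_of_eq (hx.2.1 a ha).symm
    · intro a
      by_cases ha : a ∈ A
      · exact le_trans (hx.1 a ha).2 (le_max_left _ _)
      · rw [hx.2.1 a ha]; exact le_max_right _ _
  have hcpt : IsCompact C := (isCompact_Icc).of_isClosed_subset hclosed hsub
  have hcont : Continuous (fun x : (V × V) → ℝ => ∑ a ∈ A, x a) :=
    continuous_finset_sum _ fun a _ => continuous_apply a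
  obtain ⟨x, hxC, hmax⟩ := hcpt.exists_isMaxOn ⟨_, h0⟩ hcont.continuousOn
  exact ⟨x, hxC, fun z hz => hmax hz⟩

open Classical in
/-- Constraint-graph weights associated to a circulation. -/
noncomputable def cW {V : Type*} [Fintype V] [DecidableEq V]
    (A : Finset (V × V)) (q x : V × V → ℝ) (i j : V) : ℝ :=
  if (i, j) ∈ A ∧ x (i, j) < q (i, j) then -1
  else if (j, i) ∈ A ∧ 0 < x (j, i) then 1
  else (Fintype.card V : ℝ)

lemma list_sum_ge_neg_length : ∀ (L : List ℝ), (∀ r ∈ L, -1 ≤ r) → -(L.length : ℝ) ≤ L.sum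
  | [], _ => by simp
  | r :: t, h => by
    have ht := list_sum_ge_neg_length t (fun s hs => h s (List.mem_cons_of_mem _ hs))
    have hr := h r List.mem_cons_self
    simp only [List.sum_cons, List.length_cons]
    push_cast
    linarith

lemma list_sum_map_sub {α : Type*} (f g : α → ℝ) : ∀ (L : List α),
    (L.map (fun e => f e - g e)).sum = (L.map f).sum - (L.map g).sum
  | [] => by simp
  | a :: t => by
    simp only [List.map_cons, List.sum_cons, list_sum_map_sub f g t]
    ring

lemma no_neg_cycle {V : Type*} [Fintype V] [DecidableEq V]
    {A : Finset (V × V)} {q x : V × V → ℝ}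
    (hx : IsCirculation A q x)
    (hmax : ∀ z, IsCirculation A q z → ∑ a ∈ A, z a ≤ ∑ a ∈ A, x a)
    (a : V) (l : List V) (hnd : (a :: l).Nodup) :
    0 ≤ pw (cW A q x) (a :: (l ++ [a])) := by
  classical
  by_contra hneg
  push_neg at hneg
  set c := cW A q x with hc
  set L1 : List V := a :: l with hL1
  set L2 : List V := l ++ [a] with hL2
  set edges : List (V × V) := L1.zip L2 with hedges
  have hlen12 : L1.length = L2.length := by simp [hL1, hL2]
  have h_fst : edges.map Prod.fst = L1 := List.map_fst_zip (le_of_eq hlen12)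
  have h_snd : edges.map Prod.snd = L2 := List.map_snd_zip (le_of_eq hlen12.symm)
  have hnd_e : edges.Nodup := by
    have : (edges.map Prod.fst).Nodup := by rw [h_fst]; exact hnd
    exact this.of_map
  have hpw : pw c (a :: (l ++ [a])) = (edges.map (fun e => c e.1 e.2)).sum :=
    pw_zip c a a l
  have hlenl : edges.length = l.length + 1 := by
    rw [← (List.length_map Prod.fst : (edges.map Prod.fst).length = edges.length), h_fst]; simp [hL1]
  -- case predicates
  set P1 : V × V → Prop := fun e => e ∈ A ∧ x e < q e with hP1
  set P2 : V × V → Prop := fun e => (e.2, e.1) ∈ A ∧ 0 < x (e.2, e.1) with hP2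
  have hcval : ∀ e : V × V, c e.1 e.2 = if P1 e then -1 else if P2 e then 1
      else (Fintype.card V : ℝ) := by
    intro e
    simp [hc, cW, hP1, hP2]
  -- dichotomy on edges
  have hdich : ∀ e ∈ edges, P1 e ∨ P2 e := by
    intro e he
    by_contra hcon
    push_neg at hcon
    have hce : c e.1 e.2 = (Fintype.card V : ℝ) := by
      rw [hcval e, if_neg hcon.1, if_neg hcon.2]
    have hge : ∀ r ∈ edges.map (fun e => c e.1 e.2), -1 ≤ r := by
      intro r hr
      obtain ⟨e', _, rfl⟩ := List.mem_map.1 hr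
      rw [hcval e']
      have hcard1 : (1:ℝ) ≤ (Fintype.card V : ℝ) := by
        exact_mod_cast Fintype.card_pos_iff.2 ⟨a⟩
      split_ifs with h1 h2
      · exact le_refl _
      · norm_num
      · linarith
    obtain ⟨u, v, huv⟩ := List.append_of_mem he
    have hsum : (edges.map (fun e => c e.1 e.2)).sum
        = (u.map (fun e => c e.1 e.2)).sum + c e.1 e.2 + (v.map (fun e => c e.1 e.2)).sum := by
      rw [huv]; simp; ring
    have hu : -(u.length : ℝ) ≤ (u.map (fun e => c e.1 e.2)).sum := by
      have := list_sum_ge_neg_length (u.map (fun e => c e.1 e.2)) (fun r hr => by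
        refine hge r ?_
        rw [huv]
        simp only [List.map_append, List.map_cons]
        exact List.mem_append_left _ hr)
      simpa using this
    have hv : -(v.length : ℝ) ≤ (v.map (fun e => c e.1 e.2)).sum := by
      have := list_sum_ge_neg_length (v.map (fun e => c e.1 e.2)) (fun r hr => by
        refine hge r ?_
        rw [huv]
        simp only [List.map_append, List.map_cons]
        exact List.mem_append_right _ (List.mem_cons_of_mem _ hr))
      simpa using this
    have hulen : u.length + v.length = l.length := by
      have : edges.length = u.length + 1 + v.length := by rw [huv]; simp; ring
      omega
    have hcard : (l.length + 1 : ℝ) ≤ (Fintype.card V : ℝ) := by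
      have := hnd.length_le_card
      replace this : l.length + 1 ≤ Fintype.card V := this
      exact_mod_cast this
    have : (0:ℝ) ≤ (edges.map (fun e => c e.1 e.2)).sum := by
      rw [hsum, hce]
      have : (u.length : ℝ) + v.length = l.length := by exact_mod_cast hulen
      linarith
    rw [hpw] at hneg
    linarith
  -- setup for augmentation
  have hene : edges ≠ [] := by
    intro h; rw [h] at hlenl; simp at hlenl
  set s : Finset (V × V) := edges.toFinset with hs
  have hsne : s.Nonempty := by
    obtain ⟨e0, he0⟩ := List.exists_mem_of_ne_nil edges hene
    exact ⟨e0, List.mem_toFinset.2 he0⟩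
  have hmem_s : ∀ e, e ∈ s ↔ e ∈ edges := fun e => List.mem_toFinset
  set w : (V × V) → ℝ := fun e => if P1 e then q e - x e else x (e.2, e.1) with hw
  set ε : ℝ := s.inf' hsne w with heps
  have hεle : ∀ e ∈ s, ε ≤ w e := fun e he => Finset.inf'_le _ he
  have hε : 0 < ε := by
    rw [heps, Finset.lt_inf'_iff]
    intro e he
    rcases hdich e ((hmem_s e).1 he) with h1 | h2
    · simp only [hw]
      rw [if_pos h1]; linarith [h1.2]
    · simp only [hw]
      split_ifs with h1
      · linarith [h1.2]
      · exact h2.2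
  set δ : (V × V) → (V × V) → ℝ := fun e b =>
    if P1 e then (if b = e then ε else 0)
    else if P2 e then (if b = (e.2, e.1) then -ε else 0) else 0 with hδ
  set x' : (V × V) → ℝ := fun b => x b + ∑ e ∈ s, δ e b with hx'def
  -- pointwise upper bound on contributions
  have hub : ∀ b, ∑ e ∈ s, δ e b ≤ if b ∈ s ∧ P1 b then ε else 0 := by
    intro b
    have hpt : ∀ e ∈ s, δ e b ≤ if e = b then (if P1 b then ε else 0) else 0 := by
      intro e he
      simp only [hδ]
      by_cases h1 : P1 e
      · rw [if_pos h1]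
        by_cases hbe : e = b
        · subst hbe
          rw [if_pos rfl, if_pos rfl, if_pos h1]
        · rw [if_neg hbe, if_neg (fun h => hbe h.symm)]
      · rw [if_neg h1]
        have hrhs : (0:ℝ) ≤ if e = b then (if P1 b then ε else 0) else 0 := by
          split_ifs <;> first | exact hε.le | exact le_refl 0
        by_cases h2 : P2 e
        · rw [if_pos h2]
          by_cases hb2 : b = (e.2, e.1)
          · rw [if_pos hb2]; linarith
          · rw [if_neg hb2]; exact hrhs
        · rw [if_neg h2]; exact hrhs
    calc ∑ e ∈ s, δ e b ≤ ∑ e ∈ s, (if e = b then (if P1 b then ε else 0) else 0) :=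
          Finset.sum_le_sum hpt
      _ = if b ∈ s then (if P1 b then ε else 0) else 0 := Finset.sum_ite_eq' s b _
      _ ≤ if b ∈ s ∧ P1 b then ε else 0 := by
          by_cases h1 : b ∈ s
          · rw [if_pos h1]
            by_cases h2 : P1 b
            · rw [if_pos h2, if_pos ⟨h1, h2⟩]
            · rw [if_neg h2, if_neg (fun h => h2 h.2)]
          · rw [if_neg h1, if_neg (fun h => h1 h.1)]
  -- pointwise lower bound
  have hlb : ∀ b, (if (b.2, b.1) ∈ s ∧ ¬ P1 (b.2, b.1) ∧ P2 (b.2, b.1) then -ε else 0)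
      ≤ ∑ e ∈ s, δ e b := by
    intro b
    have hpt : ∀ e ∈ s,
        (if e = (b.2, b.1) then (if ¬ P1 (b.2, b.1) ∧ P2 (b.2, b.1) then -ε else 0) else 0)
          ≤ δ e b := by
      intro e he
      simp only [hδ]
      have hlhs : (if e = (b.2, b.1) then (if ¬ P1 (b.2, b.1) ∧ P2 (b.2, b.1) then -ε else 0)
          else 0) ≤ 0 := by
        split_ifs <;> first | exact neg_nonpos.mpr hε.le | exact le_refl 0
      by_cases h1 : P1 e
      · rw [if_pos h1]
        have : (0:ℝ) ≤ if b = e then ε else 0 := by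
          split_ifs <;> first | exact hε.le | exact le_refl 0
        linarith
      · rw [if_neg h1]
        by_cases h2 : P2 e
        · rw [if_pos h2]
          by_cases hb2 : b = (e.2, e.1)
          · have heb : e = (b.2, b.1) := by rw [hb2]
            have hcnd : ¬ P1 (b.2, b.1) ∧ P2 (b.2, b.1) := by
              rw [← heb]; exact ⟨h1, h2⟩
            rw [if_pos hb2, if_pos heb, if_pos hcnd]
          · have heb : e ≠ (b.2, b.1) := by
              intro h
              apply hb2
              rw [h]
            rw [if_neg hb2, if_neg heb]
        · rw [if_neg h2]
          linarith
    calc (if (b.2, b.1) ∈ s ∧ ¬ P1 (b.2, b.1) ∧ P2 (b.2, b.1) then -ε else 0)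
        ≤ if (b.2, b.1) ∈ s then (if ¬ P1 (b.2, b.1) ∧ P2 (b.2, b.1) then -ε else 0) else 0 := by
          by_cases h1 : (b.2, b.1) ∈ s
          · rw [if_pos h1]
            by_cases h2 : ¬ P1 (b.2, b.1) ∧ P2 (b.2, b.1)
            · rw [if_pos h2, if_pos ⟨h1, h2.1, h2.2⟩]
            · rw [if_neg h2, if_neg (fun h => h2 ⟨h.2.1, h.2.2⟩)]
          · rw [if_neg h1, if_neg (fun h => h1 h.1)]
      _ = ∑ e ∈ s, (if e = (b.2, b.1) then (if ¬ P1 (b.2, b.1) ∧ P2 (b.2, b.1) then -ε else 0)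
            else 0) := (Finset.sum_ite_eq' s ((b.2, b.1))
              (fun _ => if ¬ P1 (b.2, b.1) ∧ P2 (b.2, b.1) then -ε else 0)).symm
      _ ≤ ∑ e ∈ s, δ e b := Finset.sum_le_sum hpt
  -- x' is a circulation
  have hx' : IsCirculation A q x' := by
    refine ⟨?_, ?_, ?_⟩
    · intro b hb
      constructor
      · have := hlb b
        simp only [hx'def]
        by_cases hcase : (b.2, b.1) ∈ s ∧ ¬ P1 (b.2, b.1) ∧ P2 (b.2, b.1)
        · rw [if_pos hcase] at this
          have hxb : 0 < x b := hcase.2.2.2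
          have hwle := hεle _ hcase.1
          rw [hw] at hwle
          simp only at hwle
          rw [if_neg hcase.2.1] at hwle
          have hwle' : ε ≤ x b := hwle
          linarith
        · rw [if_neg hcase] at this
          have := (hx.1 b hb).1
          linarith [this]
      · have := hub b
        simp only [hx'def]
        by_cases hcase : b ∈ s ∧ P1 b
        · rw [if_pos hcase] at this
          have hwle := hεle _ hcase.1
          rw [hw] at hwle; simp only at hwle
          rw [if_pos hcase.2] at hwle
          linarith
        · rw [if_neg hcase] at this
          have := (hx.1 b hb).2
          linarith [this]
    · intro b hb
      simp only [hx'def]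
      rw [hx.2.1 b hb, zero_add]
      refine Finset.sum_eq_zero fun e he => ?_
      simp only [hδ]
      by_cases h1 : P1 e
      · rw [if_pos h1, if_neg ?_]
        intro h; rw [h] at hb; exact hb h1.1
      · rw [if_neg h1]
        by_cases h2 : P2 e
        · rw [if_pos h2, if_neg ?_]
          intro h; rw [h] at hb; exact hb h2.1
        · rw [if_neg h2]
    · intro i
      simp only [hx'def]
      rw [Finset.sum_add_distrib, Finset.sum_add_distrib, hx.2.2 i]
      congr 1
      have hLc : ∑ a ∈ A.filter (fun a => a.1 = i), ∑ e ∈ s, δ e a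
          = ∑ e ∈ s, ∑ a ∈ A.filter (fun a => a.1 = i), δ e a := Finset.sum_comm
      have hRc : ∑ a ∈ A.filter (fun a => a.2 = i), ∑ e ∈ s, δ e a
          = ∑ e ∈ s, ∑ a ∈ A.filter (fun a => a.2 = i), δ e a := Finset.sum_comm
      rw [hLc, hRc, ← sub_eq_zero, ← Finset.sum_sub_distrib]
      have key : ∀ (F : Finset (V × V)) (e' : V × V) (r : ℝ),
          (∑ a ∈ F, if a = e' then r else 0) = if e' ∈ F then r else 0 :=
        fun F e' r => Finset.sum_ite_eq' F e' (fun _ => r)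
      have hper : ∀ e ∈ s,
          (∑ a ∈ A.filter (fun a => a.1 = i), δ e a)
            - (∑ a ∈ A.filter (fun a => a.2 = i), δ e a)
          = (if e.1 = i then ε else 0) - (if e.2 = i then ε else 0) := by
        intro e he
        by_cases h1 : P1 e
        · simp only [hδ, if_pos h1]
          rw [key, key]
          have hA := h1.1
          by_cases hi1 : e.1 = i
          · rw [if_pos (show e ∈ A.filter (fun a => a.1 = i) from
              Finset.mem_filter.2 ⟨hA, hi1⟩), if_pos hi1]
            by_cases hi2 : e.2 = i
            · rw [if_pos (show e ∈ A.filter (fun a => a.2 = i) from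
                Finset.mem_filter.2 ⟨hA, hi2⟩), if_pos hi2]
            · rw [if_neg (show ¬ e ∈ A.filter (fun a => a.2 = i) from
                fun h => hi2 (Finset.mem_filter.1 h).2), if_neg hi2]
          · rw [if_neg (show ¬ e ∈ A.filter (fun a => a.1 = i) from
              fun h => hi1 (Finset.mem_filter.1 h).2), if_neg hi1]
            by_cases hi2 : e.2 = i
            · rw [if_pos (show e ∈ A.filter (fun a => a.2 = i) from
                Finset.mem_filter.2 ⟨hA, hi2⟩), if_pos hi2]
            · rw [if_neg (show ¬ e ∈ A.filter (fun a => a.2 = i) from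
                fun h => hi2 (Finset.mem_filter.1 h).2), if_neg hi2]
        · have h2 := (hdich e ((hmem_s e).1 he)).resolve_left h1
          simp only [hδ, if_neg h1, if_pos h2]
          rw [key, key]
          have hA := h2.1
          by_cases hi2 : e.2 = i
          · rw [if_pos (show (e.2, e.1) ∈ A.filter (fun a => a.1 = i) from
              Finset.mem_filter.2 ⟨hA, hi2⟩)]
            by_cases hi1 : e.1 = i
            · rw [if_pos (show (e.2, e.1) ∈ A.filter (fun a => a.2 = i) from
                Finset.mem_filter.2 ⟨hA, hi1⟩), if_pos hi1, if_pos hi2]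
              ring
            · rw [if_neg (show ¬ (e.2, e.1) ∈ A.filter (fun a => a.2 = i) from
                fun h => hi1 (Finset.mem_filter.1 h).2), if_pos hi2, if_neg hi1]
              ring
          · rw [if_neg (show ¬ (e.2, e.1) ∈ A.filter (fun a => a.1 = i) from
              fun h => hi2 (Finset.mem_filter.1 h).2)]
            by_cases hi1 : e.1 = i
            · rw [if_pos (show (e.2, e.1) ∈ A.filter (fun a => a.2 = i) from
                Finset.mem_filter.2 ⟨hA, hi1⟩), if_pos hi1, if_neg hi2]
              ring
            · rw [if_neg (show ¬ (e.2, e.1) ∈ A.filter (fun a => a.2 = i) from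
                fun h => hi1 (Finset.mem_filter.1 h).2), if_neg hi1, if_neg hi2]
      rw [Finset.sum_congr rfl hper]
      have hsum_eq : ∑ e ∈ s, ((if e.1 = i then ε else 0) - (if e.2 = i then ε else 0))
          = (edges.map (fun e =>
              (if e.1 = i then ε else 0) - (if e.2 = i then ε else 0))).sum := by
        rw [hs]
        exact List.sum_toFinset _ hnd_e
      rw [hsum_eq, list_sum_map_sub (fun e => if e.1 = i then ε else 0)
        (fun e => if e.2 = i then ε else 0) edges]
      have h1' : edges.map (fun e : V × V => if e.1 = i then ε else 0)
          = L1.map (fun v => if v = i then ε else 0) := by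
        rw [← h_fst, List.map_map]
        rfl
      have h2' : edges.map (fun e : V × V => if e.2 = i then ε else 0)
          = L2.map (fun v => if v = i then ε else 0) := by
        rw [← h_snd, List.map_map]
        rfl
      rw [h1', h2']
      have hperm : (L2.map (fun v => if v = i then ε else 0)).sum
          = (L1.map (fun v => if v = i then ε else 0)).sum :=
        ((List.perm_append_singleton a l).map _).sum_eq
      rw [hperm, sub_self]
  -- strictly larger value: contradiction
  have hval : ∑ b ∈ A, x' b = ∑ b ∈ A, x b + ∑ e ∈ s, (∑ b ∈ A, δ e b) := by
    simp only [hx'def]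
    rw [Finset.sum_add_distrib]
    congr 1
    exact Finset.sum_comm
  have hterm : ∀ e ∈ s, ∑ b ∈ A, δ e b = -ε * c e.1 e.2 := by
    intro e he
    by_cases h1 : P1 e
    · simp only [hδ, if_pos h1]
      rw [Finset.sum_ite_eq' A e (fun _ => ε), if_pos h1.1, hcval e, if_pos h1]
      ring
    · have h2 := (hdich e ((hmem_s e).1 he)).resolve_left h1
      simp only [hδ, if_neg h1, if_pos h2]
      rw [Finset.sum_ite_eq' A ((e.2, e.1)) (fun _ => -ε), if_pos h2.1, hcval e,
        if_neg h1, if_pos h2]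
      ring
  have hfin : ∑ b ∈ A, x' b = ∑ b ∈ A, x b - ε * (edges.map (fun e => c e.1 e.2)).sum := by
    rw [hval, Finset.sum_congr rfl hterm]
    have : ∑ e ∈ s, -ε * c e.1 e.2 = -ε * ∑ e ∈ s, c e.1 e.2 := (Finset.mul_sum _ _ _).symm
    rw [this]
    have : ∑ e ∈ s, c e.1 e.2 = (edges.map (fun e => c e.1 e.2)).sum := by
      rw [hs]; exact List.sum_toFinset _ hnd_e
    rw [this]
    ring
  have hneg' : (edges.map (fun e => c e.1 e.2)).sum < 0 := by rw [← hpw]; exact hneg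
  have hgt : ∑ b ∈ A, x b < ∑ b ∈ A, x' b := by
    rw [hfin]
    nlinarith
  exact absurd (hmax x' hx') (not_le.2 hgt)


/-- LP duality between the relaxed Kemeny (agony) objective and
the maximum circulation value. -/
theorem relax_kemeny_duality
    {V : Type*} [Fintype V] [DecidableEq V]
    (A : Finset (V × V)) (q : V × V → ℝ)
    (hq : ∀ a ∈ A, 0 ≤ q a) :
    sInf {s : ℝ | ∃ y : V → ℝ,
        s = ∑ a ∈ A, q a * max (y a.2 - y a.1 + 1) 0}
      = sSup {s : ℝ | ∃ x : V × V → ℝ,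
        IsCirculation A q x ∧ s = ∑ a ∈ A, x a} := by
  classical
  set D : Set ℝ := {s : ℝ | ∃ y : V → ℝ,
      s = ∑ a ∈ A, q a * max (y a.2 - y a.1 + 1) 0} with hD
  set P : Set ℝ := {s : ℝ | ∃ x : V × V → ℝ,
      IsCirculation A q x ∧ s = ∑ a ∈ A, x a} with hP
  obtain ⟨x, hx, hmax⟩ := exists_max_circ A q hq
  have hcyc : ∀ (a : V) (l : List V), (a :: l).Nodup →
      0 ≤ pw (cW A q x) (a :: (l ++ [a])) :=
    fun a l hnd => no_neg_cycle hx hmax a l hnd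
  obtain ⟨y, hy⟩ := exists_potential (cW A q x) hcyc
  have hcons1 : ∀ a ∈ A, x a < q a → y a.2 - y a.1 + 1 ≤ 0 := by
    intro a ha hlt
    have h := hy a.1 a.2
    have hc : cW A q x a.1 a.2 = -1 := by
      unfold cW
      rw [if_pos (show (a.1, a.2) ∈ A ∧ x (a.1, a.2) < q (a.1, a.2) from ⟨ha, hlt⟩)]
    rw [hc] at h
    linarith
  have hcons2 : ∀ a ∈ A, 0 < x a → 0 ≤ y a.2 - y a.1 + 1 := by
    intro a ha hpos
    have h := hy a.2 a.1
    have hc : cW A q x a.2 a.1 ≤ 1 := by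
      unfold cW
      split_ifs with h1 h2
      · norm_num
      · exact le_refl _
      · exact absurd (show (a.1, a.2) ∈ A ∧ 0 < x (a.1, a.2) from ⟨ha, hpos⟩) h2
    linarith
  have hkey : ∀ a ∈ A, x a * (y a.2 - y a.1 + 1) = q a * max (y a.2 - y a.1 + 1) 0 := by
    intro a ha
    obtain ⟨h0, hq'⟩ := hx.1 a ha
    rcases lt_or_eq_of_le hq' with hlt | heq
    · have ht0 : y a.2 - y a.1 + 1 ≤ 0 := hcons1 a ha hlt
      rw [max_eq_right ht0, mul_zero]
      rcases lt_or_eq_of_le h0 with hp | hz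
      · have ht1 := hcons2 a ha hp
        have ht2 : y a.2 - y a.1 + 1 = 0 := le_antisymm ht0 ht1
        rw [ht2, mul_zero]
      · rw [← hz, zero_mul]
    · rcases lt_or_eq_of_le h0 with hp | hz
      · have ht0 := hcons2 a ha hp
        rw [max_eq_left ht0, heq]
      · have hq0 : q a = 0 := by rw [← heq, ← hz]
        rw [← hz, zero_mul, hq0, zero_mul]
  have hdualval : ∑ a ∈ A, q a * max (y a.2 - y a.1 + 1) 0 = ∑ a ∈ A, x a := by
    rw [← Finset.sum_congr rfl hkey]
    have hexp : ∑ a ∈ A, x a * (y a.2 - y a.1 + 1)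
        = ∑ a ∈ A, x a * (y a.2 - y a.1) + ∑ a ∈ A, x a := by
      rw [← Finset.sum_add_distrib]
      exact Finset.sum_congr rfl fun a _ => by ring
    rw [hexp, circ_pot_zero hx y, zero_add]
  have hPmem : (∑ a ∈ A, x a) ∈ P := ⟨x, hx, rfl⟩
  have hDmem : (∑ a ∈ A, x a) ∈ D := ⟨y, hdualval.symm⟩
  have hPne : P.Nonempty := ⟨_, hPmem⟩
  have hDne : D.Nonempty := ⟨_, hDmem⟩
  have hDlb : ∀ d ∈ D, (0:ℝ) ≤ d := by
    rintro d ⟨y', rfl⟩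
    exact Finset.sum_nonneg fun a ha => mul_nonneg (hq a ha) (le_max_right _ _)
  have hPub : ∀ p ∈ P, p ≤ ∑ a ∈ A, x a := by
    rintro p ⟨z, hz, rfl⟩
    exact hmax z hz
  apply le_antisymm
  · calc sInf D ≤ ∑ a ∈ A, x a := csInf_le ⟨0, fun d hd => hDlb d hd⟩ hDmem
      _ ≤ sSup P := le_csSup ⟨∑ a ∈ A, x a, fun p hp => hPub p hp⟩ hPmem
  · refine le_csInf hDne fun d hd => ?_
    refine csSup_le hPne fun p hp => ?_
    obtain ⟨z, hz, rfl⟩ := hp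
    obtain ⟨y', rfl⟩ := hd
    exact weak_duality hq hz y'
end

section
/- There exist a vote graph and two minimum maximal circulations x' and x'' whose induced partial orders conflict: for some alternatives i, j, there is a directed path from i to j in A(q−x') and a directed path from j to i in A(q−x''). -/
open Finset

/-- A maximal circulation: no circulation dominates it componentwise. -/
def IsMaximalCirculation {V : Type*} [Fintype V] [DecidableEq V]
    (A : Finset (V × V)) (q x : V × V → ℝ) : Prop :=
  IsCirculation A q x ∧
  ∀ x'', IsCirculation A q x'' → (∀ a, x a ≤ x'' a) → x'' = x

/-- A minimum maximal circulation: a maximal circulation of minimum total flow. -/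
def IsMinMaximalCirculation {V : Type*} [Fintype V] [DecidableEq V]
    (A : Finset (V × V)) (q x : V × V → ℝ) : Prop :=
  IsMaximalCirculation A q x ∧
  ∀ y, IsMaximalCirculation A q y → ∑ a ∈ A, x a ≤ ∑ a ∈ A, y a


def Agr : Finset (Fin 8 × Fin 8) :=
  {(0,1),(1,2),(1,4),(2,3),(3,0),(3,6),(4,5),(5,0),(5,4),(6,7),(7,2),(7,6)}

noncomputable def qf : Fin 8 × Fin 8 → ℝ := fun _ => 1

noncomputable def xp : Fin 8 × Fin 8 → ℝ :=
  fun a => if a ∈ ({(2,3),(3,6),(6,7),(7,2),(4,5),(5,4)} : Finset (Fin 8 × Fin 8)) then 1 else 0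

noncomputable def xpp : Fin 8 × Fin 8 → ℝ :=
  fun a => if a ∈ ({(0,1),(1,4),(4,5),(5,0),(6,7),(7,6)} : Finset (Fin 8 × Fin 8)) then 1 else 0

lemma balance_iff (x : Fin 8 × Fin 8 → ℝ) :
    (∀ i : Fin 8, ∑ a ∈ Agr.filter (fun a => a.1 = i), x a
        = ∑ a ∈ Agr.filter (fun a => a.2 = i), x a) ↔
    (x (0,1) = x (3,0) + x (5,0) ∧
     x (1,2) + x (1,4) = x (0,1) ∧
     x (2,3) = x (1,2) + x (7,2) ∧
     x (3,0) + x (3,6) = x (2,3) ∧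
     x (4,5) = x (1,4) + x (5,4) ∧
     x (5,0) + x (5,4) = x (4,5) ∧
     x (6,7) = x (3,6) + x (7,6) ∧
     x (7,2) + x (7,6) = x (6,7)) := by
  have o0 : Agr.filter (fun a => a.1 = (0:Fin 8)) = {(0,1)} := by decide
  have o1 : Agr.filter (fun a => a.1 = (1:Fin 8)) = {(1,2),(1,4)} := by decide
  have o2 : Agr.filter (fun a => a.1 = (2:Fin 8)) = {(2,3)} := by decide
  have o3 : Agr.filter (fun a => a.1 = (3:Fin 8)) = {(3,0),(3,6)} := by decide
  have o4 : Agr.filter (fun a => a.1 = (4:Fin 8)) = {(4,5)} := by decide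
  have o5 : Agr.filter (fun a => a.1 = (5:Fin 8)) = {(5,0),(5,4)} := by decide
  have o6 : Agr.filter (fun a => a.1 = (6:Fin 8)) = {(6,7)} := by decide
  have o7 : Agr.filter (fun a => a.1 = (7:Fin 8)) = {(7,2),(7,6)} := by decide
  have i0 : Agr.filter (fun a => a.2 = (0:Fin 8)) = {(3,0),(5,0)} := by decide
  have i1 : Agr.filter (fun a => a.2 = (1:Fin 8)) = {(0,1)} := by decide
  have i2 : Agr.filter (fun a => a.2 = (2:Fin 8)) = {(1,2),(7,2)} := by decide
  have i3 : Agr.filter (fun a => a.2 = (3:Fin 8)) = {(2,3)} := by decide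
  have i4 : Agr.filter (fun a => a.2 = (4:Fin 8)) = {(1,4),(5,4)} := by decide
  have i5 : Agr.filter (fun a => a.2 = (5:Fin 8)) = {(4,5)} := by decide
  have i6 : Agr.filter (fun a => a.2 = (6:Fin 8)) = {(3,6),(7,6)} := by decide
  have i7 : Agr.filter (fun a => a.2 = (7:Fin 8)) = {(6,7)} := by decide
  constructor
  · intro h
    have h0 := h 0; have h1 := h 1; have h2 := h 2; have h3 := h 3
    have h4 := h 4; have h5 := h 5; have h6 := h 6; have h7 := h 7
    rw [o0, i0, Finset.sum_singleton, Finset.sum_insert (by decide), Finset.sum_singleton] at h0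
    rw [o1, i1, Finset.sum_insert (by decide), Finset.sum_singleton, Finset.sum_singleton] at h1
    rw [o2, i2, Finset.sum_singleton, Finset.sum_insert (by decide), Finset.sum_singleton] at h2
    rw [o3, i3, Finset.sum_insert (by decide), Finset.sum_singleton, Finset.sum_singleton] at h3
    rw [o4, i4, Finset.sum_singleton, Finset.sum_insert (by decide), Finset.sum_singleton] at h4
    rw [o5, i5, Finset.sum_insert (by decide), Finset.sum_singleton, Finset.sum_singleton] at h5
    rw [o6, i6, Finset.sum_singleton, Finset.sum_insert (by decide), Finset.sum_singleton] at h6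
    rw [o7, i7, Finset.sum_insert (by decide), Finset.sum_singleton, Finset.sum_singleton] at h7
    exact ⟨h0, h1, h2, h3, h4, h5, h6, h7⟩
  · rintro ⟨h0, h1, h2, h3, h4, h5, h6, h7⟩ i
    rcases (by decide : ∀ j : Fin 8, j = 0 ∨ j = 1 ∨ j = 2 ∨ j = 3 ∨ j = 4 ∨ j = 5 ∨ j = 6 ∨ j = 7) i with rfl|rfl|rfl|rfl|rfl|rfl|rfl|rfl
    · rw [o0, i0, Finset.sum_singleton, Finset.sum_insert (by decide), Finset.sum_singleton]; exact h0
    · rw [o1, i1, Finset.sum_insert (by decide), Finset.sum_singleton, Finset.sum_singleton]; exact h1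
    · rw [o2, i2, Finset.sum_singleton, Finset.sum_insert (by decide), Finset.sum_singleton]; exact h2
    · rw [o3, i3, Finset.sum_insert (by decide), Finset.sum_singleton, Finset.sum_singleton]; exact h3
    · rw [o4, i4, Finset.sum_singleton, Finset.sum_insert (by decide), Finset.sum_singleton]; exact h4
    · rw [o5, i5, Finset.sum_insert (by decide), Finset.sum_singleton, Finset.sum_singleton]; exact h5
    · rw [o6, i6, Finset.sum_singleton, Finset.sum_insert (by decide), Finset.sum_singleton]; exact h6
    · rw [o7, i7, Finset.sum_insert (by decide), Finset.sum_singleton, Finset.sum_singleton]; exact h7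

lemma sum_Agr (x : Fin 8 × Fin 8 → ℝ) :
    ∑ a ∈ Agr, x a = x (0,1)+x (1,2)+x (1,4)+x (2,3)+x (3,0)+x (3,6)
      +x (4,5)+x (5,0)+x (5,4)+x (6,7)+x (7,2)+x (7,6) := by
  rw [show Agr = {(0,1),(1,2),(1,4),(2,3),(3,0),(3,6),(4,5),(5,0),(5,4),(6,7),(7,2),(7,6)} from rfl]
  repeat rw [Finset.sum_insert (by decide)]
  rw [Finset.sum_singleton]; ring

lemma exists_sat (y : Fin 8 × Fin 8 → ℝ) (hy : IsMaximalCirculation Agr qf y)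
    (S : Finset (Fin 8 × Fin 8)) (hS : S ⊆ Agr) (hne : S.Nonempty)
    (hbal : ∀ i : Fin 8, (S.filter (fun a => a.1 = i)).card = (S.filter (fun a => a.2 = i)).card) :
    ∃ a ∈ S, y a = 1 := by
  by_contra hcon
  push_neg at hcon
  obtain ⟨⟨hb, h0, hc⟩, hmax⟩ := hy
  have hq : ∀ a, qf a = 1 := fun _ => rfl
  have hlt : ∀ a ∈ S, y a < 1 := fun a ha =>
    lt_of_le_of_ne (by rw [← hq a]; exact (hb a (hS ha)).2) (hcon a ha)
  set ε := S.inf' hne (fun a => 1 - y a) with hεdef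
  have hεpos : 0 < ε := by
    rw [hεdef, Finset.lt_inf'_iff]
    intro a ha; linarith [hlt a ha]
  have hεle : ∀ a ∈ S, ε ≤ 1 - y a := fun a ha => Finset.inf'_le _ ha
  set z : Fin 8 × Fin 8 → ℝ := fun a => y a + if a ∈ S then ε else 0 with hzdef
  have zv : ∀ a, z a = y a + if a ∈ S then ε else 0 := fun _ => rfl
  have hzc : IsCirculation Agr qf z := by
    refine ⟨?_, ?_, ?_⟩
    · intro a ha
      rw [zv a, hq a]
      by_cases hm : a ∈ S
      · rw [if_pos hm]
        exact ⟨by linarith [(hb a ha).1, hεpos], by linarith [hεle a hm]⟩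
      · rw [if_neg hm, add_zero]
        exact ⟨(hb a ha).1, by rw [← hq a]; exact (hb a ha).2⟩
    · intro a ha
      rw [zv a, if_neg (fun h => ha (hS h)), h0 a ha, add_zero]
    · intro i
      have key : ∀ (P : Fin 8 × Fin 8 → Prop) (_ : DecidablePred P),
          ∑ a ∈ Agr.filter P, z a
            = ∑ a ∈ Agr.filter P, y a + ε * (S.filter P).card := by
        intro P hP
        simp only [zv, Finset.sum_add_distrib]
        congr 1
        rw [← Finset.sum_filter]
        rw [show (Agr.filter P).filter (fun a => a ∈ S) = S.filter P by
          ext a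
          simp only [Finset.mem_filter]
          constructor
          · rintro ⟨⟨-, hp⟩, hs⟩; exact ⟨hs, hp⟩
          · rintro ⟨hs, hp⟩; exact ⟨⟨hS hs, hp⟩, hs⟩]
        rw [Finset.sum_const, nsmul_eq_mul, mul_comm]
      have k1 := key (fun a => a.1 = i) inferInstance
      have k2 := key (fun a => a.2 = i) inferInstance
      rw [k1, k2, hc i, hbal i]
  have heq := hmax z hzc (fun a => by
    rw [zv a]
    by_cases hm : a ∈ S
    · rw [if_pos hm]; linarith
    · rw [if_neg hm, add_zero])
  obtain ⟨a0, ha0⟩ := hne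
  have hval := congrFun heq a0
  rw [zv a0, if_pos ha0] at hval
  linarith

lemma xp_01 : xp (0,1) = 0 := by unfold xp; rw [if_neg (by decide)]
lemma xp_12 : xp (1,2) = 0 := by unfold xp; rw [if_neg (by decide)]
lemma xp_14 : xp (1,4) = 0 := by unfold xp; rw [if_neg (by decide)]
lemma xp_23 : xp (2,3) = 1 := by unfold xp; rw [if_pos (by decide)]
lemma xp_30 : xp (3,0) = 0 := by unfold xp; rw [if_neg (by decide)]
lemma xp_36 : xp (3,6) = 1 := by unfold xp; rw [if_pos (by decide)]
lemma xp_45 : xp (4,5) = 1 := by unfold xp; rw [if_pos (by decide)]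
lemma xp_50 : xp (5,0) = 0 := by unfold xp; rw [if_neg (by decide)]
lemma xp_54 : xp (5,4) = 1 := by unfold xp; rw [if_pos (by decide)]
lemma xp_67 : xp (6,7) = 1 := by unfold xp; rw [if_pos (by decide)]
lemma xp_72 : xp (7,2) = 1 := by unfold xp; rw [if_pos (by decide)]
lemma xp_76 : xp (7,6) = 0 := by unfold xp; rw [if_neg (by decide)]
lemma xpp_01 : xpp (0,1) = 1 := by unfold xpp; rw [if_pos (by decide)]
lemma xpp_12 : xpp (1,2) = 0 := by unfold xpp; rw [if_neg (by decide)]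
lemma xpp_14 : xpp (1,4) = 1 := by unfold xpp; rw [if_pos (by decide)]
lemma xpp_23 : xpp (2,3) = 0 := by unfold xpp; rw [if_neg (by decide)]
lemma xpp_30 : xpp (3,0) = 0 := by unfold xpp; rw [if_neg (by decide)]
lemma xpp_36 : xpp (3,6) = 0 := by unfold xpp; rw [if_neg (by decide)]
lemma xpp_45 : xpp (4,5) = 1 := by unfold xpp; rw [if_pos (by decide)]
lemma xpp_50 : xpp (5,0) = 1 := by unfold xpp; rw [if_pos (by decide)]
lemma xpp_54 : xpp (5,4) = 0 := by unfold xpp; rw [if_neg (by decide)]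
lemma xpp_67 : xpp (6,7) = 1 := by unfold xpp; rw [if_pos (by decide)]
lemma xpp_72 : xpp (7,2) = 0 := by unfold xpp; rw [if_neg (by decide)]
lemma xpp_76 : xpp (7,6) = 1 := by unfold xpp; rw [if_pos (by decide)]

lemma circ_xp : IsCirculation Agr qf xp := by
  refine ⟨fun a ha => ?_, fun a ha => ?_, ?_⟩
  · unfold xp qf; split <;> norm_num
  · unfold xp; rw [if_neg (fun hm => ha (Finset.mem_of_subset (by decide) hm))]
  · rw [balance_iff]
    simp only [xp_01, xp_12, xp_14, xp_23, xp_30, xp_36, xp_45, xp_50, xp_54, xp_67, xp_72, xp_76]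
    norm_num

lemma circ_xpp : IsCirculation Agr qf xpp := by
  refine ⟨fun a ha => ?_, fun a ha => ?_, ?_⟩
  · unfold xpp qf; split <;> norm_num
  · unfold xpp; rw [if_neg (fun hm => ha (Finset.mem_of_subset (by decide) hm))]
  · rw [balance_iff]
    simp only [xpp_01, xpp_12, xpp_14, xpp_23, xpp_30, xpp_36, xpp_45, xpp_50, xpp_54, xpp_67, xpp_72, xpp_76]
    norm_num

lemma mem_Agr_cases : ∀ b : Fin 8 × Fin 8, b ∈ Agr →
    b = (0,1) ∨ b = (1,2) ∨ b = (1,4) ∨ b = (2,3) ∨ b = (3,0) ∨ b = (3,6) ∨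
    b = (4,5) ∨ b = (5,0) ∨ b = (5,4) ∨ b = (6,7) ∨ b = (7,2) ∨ b = (7,6) := by decide


lemma maxl_xp : IsMaximalCirculation Agr qf xp := by
  refine ⟨circ_xp, fun z hz hle => ?_⟩
  obtain ⟨hb, h0, hc⟩ := hz
  obtain ⟨e0,e1,e2,e3,e4,e5,e6,e7⟩ := (balance_iff z).mp hc
  have hq : ∀ a, qf a = (1:ℝ) := fun _ => rfl
  have bd : ∀ a ∈ Agr, 0 ≤ z a ∧ z a ≤ 1 := fun a ha =>
    ⟨(hb a ha).1, by rw [← hq a]; exact (hb a ha).2⟩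
  have s23 : z (2,3) = 1 := le_antisymm (bd (2,3) (by decide)).2 (by have := hle (2,3); rwa [xp_23] at this)
  have s36 : z (3,6) = 1 := le_antisymm (bd (3,6) (by decide)).2 (by have := hle (3,6); rwa [xp_36] at this)
  have s67 : z (6,7) = 1 := le_antisymm (bd (6,7) (by decide)).2 (by have := hle (6,7); rwa [xp_67] at this)
  have s72 : z (7,2) = 1 := le_antisymm (bd (7,2) (by decide)).2 (by have := hle (7,2); rwa [xp_72] at this)
  have s45 : z (4,5) = 1 := le_antisymm (bd (4,5) (by decide)).2 (by have := hle (4,5); rwa [xp_45] at this)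
  have s54 : z (5,4) = 1 := le_antisymm (bd (5,4) (by decide)).2 (by have := hle (5,4); rwa [xp_54] at this)
  have u12 : z (1,2) = 0 := by linarith [(bd (1,2) (by decide)).1]
  have u14 : z (1,4) = 0 := by linarith [(bd (1,4) (by decide)).1]
  have u01 : z (0,1) = 0 := by linarith
  have u30 : z (3,0) = 0 := by linarith [(bd (3,0) (by decide)).1, (bd (5,0) (by decide)).1]
  have u50 : z (5,0) = 0 := by linarith [(bd (3,0) (by decide)).1, (bd (5,0) (by decide)).1]
  have u76 : z (7,6) = 0 := by linarith
  funext a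
  by_cases ha : a ∈ Agr
  · rcases mem_Agr_cases a ha with rfl|rfl|rfl|rfl|rfl|rfl|rfl|rfl|rfl|rfl|rfl|rfl <;>
      simp only [xp_01, xp_12, xp_14, xp_23, xp_30, xp_36, xp_45, xp_50, xp_54, xp_67, xp_72, xp_76] <;> linarith
  · rw [h0 a ha]; unfold xp; rw [if_neg (fun hm => ha (Finset.mem_of_subset (by decide) hm))]


lemma maxl_xpp : IsMaximalCirculation Agr qf xpp := by
  refine ⟨circ_xpp, fun z hz hle => ?_⟩
  obtain ⟨hb, h0, hc⟩ := hz
  obtain ⟨e0,e1,e2,e3,e4,e5,e6,e7⟩ := (balance_iff z).mp hc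
  have hq : ∀ a, qf a = (1:ℝ) := fun _ => rfl
  have bd : ∀ a ∈ Agr, 0 ≤ z a ∧ z a ≤ 1 := fun a ha =>
    ⟨(hb a ha).1, by rw [← hq a]; exact (hb a ha).2⟩
  have s01 : z (0,1) = 1 := le_antisymm (bd (0,1) (by decide)).2 (by have := hle (0,1); rwa [xpp_01] at this)
  have s14 : z (1,4) = 1 := le_antisymm (bd (1,4) (by decide)).2 (by have := hle (1,4); rwa [xpp_14] at this)
  have s45 : z (4,5) = 1 := le_antisymm (bd (4,5) (by decide)).2 (by have := hle (4,5); rwa [xpp_45] at this)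
  have s50 : z (5,0) = 1 := le_antisymm (bd (5,0) (by decide)).2 (by have := hle (5,0); rwa [xpp_50] at this)
  have s67 : z (6,7) = 1 := le_antisymm (bd (6,7) (by decide)).2 (by have := hle (6,7); rwa [xpp_67] at this)
  have s76 : z (7,6) = 1 := le_antisymm (bd (7,6) (by decide)).2 (by have := hle (7,6); rwa [xpp_76] at this)
  have u12 : z (1,2) = 0 := by linarith [(bd (1,2) (by decide)).1]
  have u54 : z (5,4) = 0 := by linarith [(bd (5,4) (by decide)).1]
  have u36 : z (3,6) = 0 := by linarith [(bd (3,6) (by decide)).1]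
  have u72 : z (7,2) = 0 := by linarith [(bd (7,2) (by decide)).1]
  have u23 : z (2,3) = 0 := by linarith
  have u30 : z (3,0) = 0 := by linarith
  funext a
  by_cases ha : a ∈ Agr
  · rcases mem_Agr_cases a ha with rfl|rfl|rfl|rfl|rfl|rfl|rfl|rfl|rfl|rfl|rfl|rfl <;>
      simp only [xpp_01, xpp_12, xpp_14, xpp_23, xpp_30, xpp_36, xpp_45, xpp_50, xpp_54, xpp_67, xpp_72, xpp_76] <;> linarith
  · rw [h0 a ha]; unfold xpp; rw [if_neg (fun hm => ha (Finset.mem_of_subset (by decide) hm))]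


lemma flow_ge (y : Fin 8 × Fin 8 → ℝ) (hy : IsMaximalCirculation Agr qf y) :
    6 ≤ ∑ a ∈ Agr, y a := by
  have c2 := exists_sat y hy {(4,5),(5,4)} (by decide) ⟨(4,5), by decide⟩ (by decide)
  have c4 := exists_sat y hy {(6,7),(7,6)} (by decide) ⟨(6,7), by decide⟩ (by decide)
  have c5 := exists_sat y hy {(0,1),(1,2),(2,3),(3,0)} (by decide) ⟨(0,1), by decide⟩ (by decide)
  obtain ⟨⟨hb, h0, hc⟩, -⟩ := hy
  obtain ⟨e0,e1,e2,e3,e4,e5,e6,e7⟩ := (balance_iff y).mp hc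
  have hq : ∀ a, qf a = (1:ℝ) := fun _ => rfl
  have bd : ∀ a ∈ Agr, 0 ≤ y a ∧ y a ≤ 1 := fun a ha =>
    ⟨(hb a ha).1, by rw [← hq a]; exact (hb a ha).2⟩
  have B01 := bd (0,1) (by decide)
  have B12 := bd (1,2) (by decide)
  have B14 := bd (1,4) (by decide)
  have B23 := bd (2,3) (by decide)
  have B30 := bd (3,0) (by decide)
  have B36 := bd (3,6) (by decide)
  have B45 := bd (4,5) (by decide)
  have B50 := bd (5,0) (by decide)
  have B54 := bd (5,4) (by decide)
  have B67 := bd (6,7) (by decide)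
  have B72 := bd (7,2) (by decide)
  have B76 := bd (7,6) (by decide)
  rw [sum_Agr]
  obtain ⟨a2, ha2, hv2⟩ := c2
  obtain ⟨a4, ha4, hv4⟩ := c4
  obtain ⟨a5, ha5, hv5⟩ := c5
  rcases (by decide : ∀ b : Fin 8 × Fin 8, b ∈ ({(4,5),(5,4)} : Finset (Fin 8 × Fin 8)) → b = (4,5) ∨ b = (5,4)) a2 ha2 with rfl|rfl <;>
  rcases (by decide : ∀ b : Fin 8 × Fin 8, b ∈ ({(6,7),(7,6)} : Finset (Fin 8 × Fin 8)) → b = (6,7) ∨ b = (7,6)) a4 ha4 with rfl|rfl <;>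
  rcases (by decide : ∀ b : Fin 8 × Fin 8, b ∈ ({(0,1),(1,2),(2,3),(3,0)} : Finset (Fin 8 × Fin 8)) → b = (0,1) ∨ b = (1,2) ∨ b = (2,3) ∨ b = (3,0)) a5 ha5 with rfl|rfl|rfl|rfl <;>
  linarith [B01.1,B01.2,B12.1,B12.2,B14.1,B14.2,B23.1,B23.2,B30.1,B30.2,B36.1,B36.2,B45.1,B45.2,B50.1,B50.2,B54.1,B54.2,B67.1,B67.2,B72.1,B72.2,B76.1,B76.2]

lemma sum_xp : ∑ a ∈ Agr, xp a = 6 := by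
  rw [sum_Agr]; simp only [xp_01, xp_12, xp_14, xp_23, xp_30, xp_36, xp_45, xp_50, xp_54, xp_67, xp_72, xp_76]; norm_num

lemma sum_xpp : ∑ a ∈ Agr, xpp a = 6 := by
  rw [sum_Agr]; simp only [xpp_01, xpp_12, xpp_14, xpp_23, xpp_30, xpp_36, xpp_45, xpp_50, xpp_54, xpp_67, xpp_72, xpp_76]; norm_num


/-- there is a vote graph with two minimum maximal circulations
inducing conflicting partial orders. -/
theorem min_maximal_circulations_can_conflict :
    ∃ (A : Finset (Fin 8 × Fin 8)) (q x' x'' : Fin 8 × Fin 8 → ℝ),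
      (∀ a ∈ A, 0 < q a) ∧
      IsMinMaximalCirculation A q x' ∧ IsMinMaximalCirculation A q x'' ∧
      ∃ i j : Fin 8, Relation.TransGen (residRel A q x') i j ∧
                     Relation.TransGen (residRel A q x'') j i := by
  refine ⟨Agr, qf, xp, xpp, fun a _ => by norm_num [qf], ⟨maxl_xp, fun y hy => ?_⟩,
    ⟨maxl_xpp, fun y hy => ?_⟩, 0, 2, ?_, ?_⟩
  · rw [sum_xp]; exact flow_ge y hy
  · rw [sum_xpp]; exact flow_ge y hy
  · exact Relation.TransGen.head
      (show residRel Agr qf xp 0 1 from ⟨by decide, by rw [xp_01]; norm_num [qf]⟩)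
      (Relation.TransGen.single ⟨by decide, by rw [xp_12]; norm_num [qf]⟩)
  · exact Relation.TransGen.head
      (show residRel Agr qf xpp 2 3 from ⟨by decide, by rw [xpp_23]; norm_num [qf]⟩)
      (Relation.TransGen.single ⟨by decide, by rw [xpp_30]; norm_num [qf]⟩)
end

section
/- If x' is a feasible circulation, y' satisfies strong complementary slackness with x', and x'' is any maximum circulation, then every arc saturated by x' is saturated by x'': x'_ij = q_ij implies x''_ij = q_ij. -/
open Finset

lemma circ_sum_potential_aux {V : Type*} [Fintype V] [DecidableEq V]
    (A : Finset (V × V)) (q x : V × V → ℝ) (y : V → ℝ)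
    (hx : IsCirculation A q x) :
    ∑ a ∈ A, x a * (y a.2 - y a.1) = 0 := by
  have h1 : ∑ a ∈ A, x a * y a.1
      = ∑ i : V, ∑ a ∈ A.filter (fun a => a.1 = i), x a * y a.1 :=
    (Finset.sum_fiberwise_of_maps_to (fun a _ => Finset.mem_univ a.1) _).symm
  have h2 : ∑ a ∈ A, x a * y a.2
      = ∑ i : V, ∑ a ∈ A.filter (fun a => a.2 = i), x a * y a.2 :=
    (Finset.sum_fiberwise_of_maps_to (fun a _ => Finset.mem_univ a.2) _).symm
  have h1' : ∑ a ∈ A, x a * y a.1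
      = ∑ i : V, y i * ∑ a ∈ A.filter (fun a => a.1 = i), x a := by
    rw [h1]
    refine Finset.sum_congr rfl fun i _ => ?_
    rw [Finset.mul_sum]
    refine Finset.sum_congr rfl fun a ha => ?_
    rw [(Finset.mem_filter.mp ha).2]; ring
  have h2' : ∑ a ∈ A, x a * y a.2
      = ∑ i : V, y i * ∑ a ∈ A.filter (fun a => a.2 = i), x a := by
    rw [h2]
    refine Finset.sum_congr rfl fun i _ => ?_
    rw [Finset.mul_sum]
    refine Finset.sum_congr rfl fun a ha => ?_
    rw [(Finset.mem_filter.mp ha).2]; ring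
  have hbal : ∀ i : V, ∑ a ∈ A.filter (fun a => a.1 = i), x a
      = ∑ a ∈ A.filter (fun a => a.2 = i), x a := hx.2.2
  have : ∑ a ∈ A, x a * y a.1 = ∑ a ∈ A, x a * y a.2 := by
    rw [h1', h2']
    exact Finset.sum_congr rfl fun i _ => by rw [hbal i]
  have hsplit : ∑ a ∈ A, x a * (y a.2 - y a.1)
      = ∑ a ∈ A, x a * y a.2 - ∑ a ∈ A, x a * y a.1 := by
    rw [← Finset.sum_sub_distrib]
    exact Finset.sum_congr rfl fun a _ => by ring
  rw [hsplit, ← this, sub_self]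

/-- if `(x', y')` satisfies strong complementary slackness, then
every arc saturated by `x'` is saturated by every maximum circulation. -/
theorem saturated_arcs_saturated_in_every_max
    {V : Type*} [Fintype V] [DecidableEq V]
    (A : Finset (V × V)) (q : V × V → ℝ)
    (hqpos : ∀ a ∈ A, 0 < q a) (x' x'' : V × V → ℝ) (y' : V → ℝ)
    (hx' : IsCirculation A q x') (hcs : StrongCS A q x' y')
    (hx'' : IsMaxCirculation A q x'') :
    ∀ a ∈ A, x' a = q a → x'' a = q a := by
  obtain ⟨hx''c, hx''max⟩ := hx''
  have h0 : ∑ a ∈ A, (x'' a - x' a) * (1 - y' a.1 + y' a.2)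
      = ∑ a ∈ A, x'' a - ∑ a ∈ A, x' a := by
    have e1 := circ_sum_potential_aux A q x' y' hx'
    have e2 := circ_sum_potential_aux A q x'' y' hx''c
    have hrw : ∀ a ∈ A, (x'' a - x' a) * (1 - y' a.1 + y' a.2)
        = (x'' a - x' a) + (x'' a * (y' a.2 - y' a.1) - x' a * (y' a.2 - y' a.1)) := by
      intro a _; ring
    rw [Finset.sum_congr rfl hrw, Finset.sum_add_distrib, Finset.sum_sub_distrib,
      Finset.sum_sub_distrib, e1, e2]
    ring
  have hterm : ∀ a ∈ A, (x'' a - x' a) * (1 - y' a.1 + y' a.2) ≤ 0 := by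
    intro a ha
    obtain ⟨h1, h2, h3⟩ := hcs a ha
    obtain ⟨hx''0, hx''q⟩ := hx''c.1 a ha
    obtain ⟨hx'0, hx'q⟩ := hx'.1 a ha
    rcases lt_or_eq_of_le hx'0 with hp | hz
    · rcases lt_or_eq_of_le hx'q with hlt | heq
      · rw [h2 hp hlt]; ring_nf; exact le_refl 0
      · have hcpos := h3 heq
        nlinarith
    · have hcle := h1 hz.symm
      nlinarith
  have hge : 0 ≤ ∑ a ∈ A, (x'' a - x' a) * (1 - y' a.1 + y' a.2) := by
    rw [h0]; have := hx''max x' hx'; linarith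
  have hle := Finset.sum_nonpos hterm
  have hall := (Finset.sum_eq_zero_iff_of_nonpos hterm).mp (le_antisymm hle hge)
  intro a ha hsat
  have hcpos := (hcs a ha).2.2 hsat
  have hz := hall a ha
  have hle2 := (hx''c.1 a ha).2
  nlinarith
end

section
/- In the 4-node example with arcs (1,2),(2,3),(3,1),(4,3),(1,4) each of capacity 1, the circulation x* with flow 1/2 on arcs (1,2),(2,3),(4,3),(1,4) and flow 1 on (3,1) is a maximum circulation, and the residual graph {(i,j) : x*_ij < q_ij} = {(1,2),(2,3),(4,3),(1,4)} is acyclic and strictly larger than the residual graph of either integral maximum circulation. -/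
open Finset

/-- The arc set of the 4-node example (nodes 0,1,2,3 stand for 1,2,3,4). -/
def A16 : Finset (Fin 4 × Fin 4) := {(0,1), (1,2), (2,0), (3,2), (0,3)}

/-- Unit capacities on the arcs of `A16`. -/
noncomputable def q16 : Fin 4 × Fin 4 → ℝ := fun a => if a ∈ A16 then 1 else 0

/-- The fractional circulation `x*`: flow 1/2 on (1,2),(2,3),(4,3),(1,4) and
flow 1 on (3,1). -/
noncomputable def xstar16 : Fin 4 × Fin 4 → ℝ := fun a =>
  if a = (2,0) then 1
  else if a ∈ ({(0,1), (1,2), (3,2), (0,3)} : Finset (Fin 4 × Fin 4)) then 1/2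
  else 0

/-- The integral maximum circulation on cycle 1-2-3-1. -/
noncomputable def xA16 : Fin 4 × Fin 4 → ℝ := fun a =>
  if a ∈ ({(0,1), (1,2), (2,0)} : Finset (Fin 4 × Fin 4)) then 1 else 0

/-- The integral maximum circulation on cycle 1-4-3-1. -/
noncomputable def xB16 : Fin 4 × Fin 4 → ℝ := fun a =>
  if a ∈ ({(0,3), (3,2), (2,0)} : Finset (Fin 4 × Fin 4)) then 1 else 0

lemma sum16 (y : Fin 4 × Fin 4 → ℝ) :
    (∑ a ∈ A16.filter (fun a => a.1 = 0), y a = y (0,1) + y (0,3)) ∧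
    (∑ a ∈ A16.filter (fun a => a.2 = 0), y a = y (2,0)) ∧
    (∑ a ∈ A16.filter (fun a => a.1 = 1), y a = y (1,2)) ∧
    (∑ a ∈ A16.filter (fun a => a.2 = 1), y a = y (0,1)) ∧
    (∑ a ∈ A16.filter (fun a => a.1 = 2), y a = y (2,0)) ∧
    (∑ a ∈ A16.filter (fun a => a.2 = 2), y a = y (1,2) + y (3,2)) ∧
    (∑ a ∈ A16.filter (fun a => a.1 = 3), y a = y (3,2)) ∧
    (∑ a ∈ A16.filter (fun a => a.2 = 3), y a = y (0,3)) ∧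
    (∑ a ∈ A16, y a = y (0,1) + y (1,2) + y (2,0) + y (3,2) + y (0,3)) := by
  refine ⟨?_,?_,?_,?_,?_,?_,?_,?_,?_⟩ <;>
    (simp [A16, Finset.filter_insert, Finset.filter_singleton, Finset.sum_insert]; try ring)

lemma sum_le_three {y : Fin 4 × Fin 4 → ℝ} (hy : IsCirculation A16 q16 y) :
    ∑ a ∈ A16, y a ≤ 3 := by
  obtain ⟨hb, -, hc⟩ := hy
  obtain ⟨h0o, h0i, h1o, h1i, h2o, h2i, h3o, h3i, hsum⟩ := sum16 y
  have e1 := hc 1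
  have e2 := hc 2
  have e3 := hc 3
  rw [h1o, h1i] at e1
  rw [h2o, h2i] at e2
  rw [h3o, h3i] at e3
  have hq : y (2,0) ≤ 1 := by
    have := (hb (2,0) (by decide)).2
    simpa [q16, A16] using this
  rw [hsum]
  linarith

lemma circ_xstar : IsCirculation A16 q16 xstar16 := by
  refine ⟨?_, ?_, ?_⟩
  · intro a ha
    fin_cases ha <;> (simp [xstar16, q16, A16]; try norm_num)
  · intro a ha
    have h1 : a ≠ (2,0) := fun h => ha (h ▸ by decide)
    have h2 : a ∉ ({(0,1),(1,2),(3,2),(0,3)} : Finset (Fin 4 × Fin 4)) :=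
      fun h => ha (by fin_cases h <;> decide)
    simp [xstar16, h1, h2]
  · intro i
    fin_cases i <;>
      (simp [A16, Finset.filter_insert, Finset.filter_singleton, xstar16]; try norm_num)

lemma circ_xA : IsCirculation A16 q16 xA16 := by
  refine ⟨?_, ?_, ?_⟩
  · intro a ha
    fin_cases ha <;> (simp [xA16, q16, A16]; try norm_num)
  · intro a ha
    have h2 : a ∉ ({(0,1),(1,2),(2,0)} : Finset (Fin 4 × Fin 4)) :=
      fun h => ha (by fin_cases h <;> decide)
    simp [xA16, h2]
  · intro i
    fin_cases i <;>
      (simp [A16, Finset.filter_insert, Finset.filter_singleton, xA16]; try norm_num)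

lemma circ_xB : IsCirculation A16 q16 xB16 := by
  refine ⟨?_, ?_, ?_⟩
  · intro a ha
    fin_cases ha <;> (simp [xB16, q16, A16]; try norm_num)
  · intro a ha
    have h2 : a ∉ ({(0,3),(3,2),(2,0)} : Finset (Fin 4 × Fin 4)) :=
      fun h => ha (by fin_cases h <;> decide)
    simp [xB16, h2]
  · intro i
    fin_cases i <;>
      (simp [A16, Finset.filter_insert, Finset.filter_singleton, xB16]; try norm_num)

lemma max_of_sum3 {x : Fin 4 × Fin 4 → ℝ} (hx : IsCirculation A16 q16 x)
    (h3 : ∑ a ∈ A16, x a = 3) : IsMaxCirculation A16 q16 x := by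
  refine ⟨hx, fun y hy => ?_⟩
  rw [h3]; exact sum_le_three hy

lemma unsat_xstar :
    unsat A16 q16 xstar16 = ({(0,1), (1,2), (3,2), (0,3)} : Finset (Fin 4 × Fin 4)) := by
  have h1 : xstar16 (0,1) < q16 (0,1) := by simp [xstar16, q16, A16]; norm_num
  have h2 : xstar16 (1,2) < q16 (1,2) := by simp [xstar16, q16, A16]; norm_num
  have h3 : ¬ xstar16 (2,0) < q16 (2,0) := by simp [xstar16, q16, A16]
  have h4 : xstar16 (3,2) < q16 (3,2) := by simp [xstar16, q16, A16]; norm_num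
  have h5 : xstar16 (0,3) < q16 (0,3) := by simp [xstar16, q16, A16]; norm_num
  simp [unsat, A16, Finset.filter_insert, Finset.filter_singleton, h1, h2, h3, h4, h5]

lemma unsat_xA : unsat A16 q16 xA16 = ({(3,2), (0,3)} : Finset (Fin 4 × Fin 4)) := by
  have h1 : ¬ xA16 (0,1) < q16 (0,1) := by simp [xA16, q16, A16]
  have h2 : ¬ xA16 (1,2) < q16 (1,2) := by simp [xA16, q16, A16]
  have h3 : ¬ xA16 (2,0) < q16 (2,0) := by simp [xA16, q16, A16]
  have h4 : xA16 (3,2) < q16 (3,2) := by simp [xA16, q16, A16]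
  have h5 : xA16 (0,3) < q16 (0,3) := by simp [xA16, q16, A16]
  simp [unsat, A16, Finset.filter_insert, Finset.filter_singleton, h1, h2, h3, h4, h5]

lemma unsat_xB : unsat A16 q16 xB16 = ({(0,1), (1,2)} : Finset (Fin 4 × Fin 4)) := by
  have h1 : xB16 (0,1) < q16 (0,1) := by simp [xB16, q16, A16]
  have h2 : xB16 (1,2) < q16 (1,2) := by simp [xB16, q16, A16]
  have h3 : ¬ xB16 (2,0) < q16 (2,0) := by simp [xB16, q16, A16]
  have h4 : ¬ xB16 (3,2) < q16 (3,2) := by simp [xB16, q16, A16]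
  have h5 : ¬ xB16 (0,3) < q16 (0,3) := by simp [xB16, q16, A16]
  simp [unsat, A16, Finset.filter_insert, Finset.filter_singleton, h1, h2, h3, h4, h5]

lemma acyclic_xstar : Acyclic (residRel A16 q16 xstar16) := by
  have hmono : ∀ i j, residRel A16 q16 xstar16 i j →
      (![0,1,2,1] : Fin 4 → ℕ) i < ![0,1,2,1] j := by
    intro i j ⟨hmem, hlt⟩
    have hm : (i,j) = ((0:Fin 4),(1:Fin 4)) ∨ (i,j) = (1,2) ∨ (i,j) = (2,0) ∨
        (i,j) = (3,2) ∨ (i,j) = (0,3) := by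
      simpa [A16, Finset.mem_insert] using hmem
    rcases hm with h | h | h | h | h <;>
      (rw [Prod.ext_iff] at h; obtain ⟨hi, hj⟩ := h; subst hi; subst hj)
    · norm_num
    · decide
    · exfalso; revert hlt; simp [xstar16, q16, A16]
    · decide
    · decide
  have key : ∀ i j, Relation.TransGen (residRel A16 q16 xstar16) i j →
      (![0,1,2,1] : Fin 4 → ℕ) i < ![0,1,2,1] j := by
    intro i j h
    induction h with
    | single h => exact hmono _ _ h
    | tail _ h ih => exact ih.trans (hmono _ _ h)
  exact fun i h => lt_irrefl _ (key i i h)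

/-- `x*` is a maximum circulation whose residual graph is
`{(1,2),(2,3),(4,3),(1,4)}`, is acyclic, and is strictly larger than the
residual graph of either integral maximum circulation. -/
theorem four_node_example :
    IsMaxCirculation A16 q16 xstar16 ∧
    unsat A16 q16 xstar16 = ({(0,1), (1,2), (3,2), (0,3)} : Finset (Fin 4 × Fin 4)) ∧
    Acyclic (residRel A16 q16 xstar16) ∧
    IsMaxCirculation A16 q16 xA16 ∧ IsMaxCirculation A16 q16 xB16 ∧
    (unsat A16 q16 xA16).card < (unsat A16 q16 xstar16).card ∧
    (unsat A16 q16 xB16).card < (unsat A16 q16 xstar16).card := by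
  obtain ⟨-, -, -, -, -, -, -, -, hsum⟩ := sum16 xstar16
  have hsx : ∑ a ∈ A16, xstar16 a = 3 := by rw [hsum]; simp [xstar16]; norm_num
  obtain ⟨-, -, -, -, -, -, -, -, hsumA⟩ := sum16 xA16
  have hsA : ∑ a ∈ A16, xA16 a = 3 := by rw [hsumA]; simp [xA16]; norm_num
  obtain ⟨-, -, -, -, -, -, -, -, hsumB⟩ := sum16 xB16
  have hsB : ∑ a ∈ A16, xB16 a = 3 := by rw [hsumB]; simp [xB16]; norm_num
  refine ⟨max_of_sum3 circ_xstar hsx, unsat_xstar, acyclic_xstar,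
    max_of_sum3 circ_xA hsA, max_of_sum3 circ_xB hsB, ?_, ?_⟩
  · rw [unsat_xA, unsat_xstar]; decide
  · rw [unsat_xB, unsat_xstar]; decide
end

section
/- The union over all maximum circulations x' of the residual arc sets A(q−x') equals the residual arc set of any single strong maximum circulation; consequently the transitive closure (strong partial order) induced by a strong maximum circulation is unique, independent of which strong maximum circulation is removed. -/
open Finset

lemma avg_circ {V : Type*} [Fintype V] [DecidableEq V]
    (A : Finset (V × V)) (q x y : V × V → ℝ)
    (hx : IsCirculation A q x) (hy : IsCirculation A q y) :
    IsCirculation A q (fun a => (x a + y a) / 2) := by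
  obtain ⟨hxb, hx0, hxbal⟩ := hx
  obtain ⟨hyb, hy0, hybal⟩ := hy
  refine ⟨fun a ha => ⟨?_, ?_⟩, fun a ha => by simp [hx0 a ha, hy0 a ha], fun i => ?_⟩
  · have := (hxb a ha).1; have := (hyb a ha).1; linarith
  · have := (hxb a ha).2; have := (hyb a ha).2; linarith
  · simp only [add_div, Finset.sum_add_distrib, ← Finset.sum_div, hxbal i, hybal i]

lemma avg_max {V : Type*} [Fintype V] [DecidableEq V]
    (A : Finset (V × V)) (q x y : V × V → ℝ)
    (hx : IsMaxCirculation A q x) (hy : IsMaxCirculation A q y) :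
    IsMaxCirculation A q (fun a => (x a + y a) / 2) := by
  have hsum : ∑ a ∈ A, y a = ∑ a ∈ A, x a :=
    le_antisymm (hx.2 y hy.1) (hy.2 x hx.1)
  refine ⟨avg_circ A q x y hx.1 hy.1, fun z hz => ?_⟩
  have : ∑ a ∈ A, (x a + y a) / 2 = ∑ a ∈ A, x a := by
    rw [← Finset.sum_div, Finset.sum_add_distrib, hsum]; ring
  rw [this]; exact hx.2 z hz

lemma avg_unsat {V : Type*} [Fintype V] [DecidableEq V]
    (A : Finset (V × V)) (q x y : V × V → ℝ)
    (hy : IsCirculation A q y) :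
    unsat A q x ⊆ unsat A q (fun a => (x a + y a) / 2) := by
  intro a ha
  rw [unsat, Finset.mem_filter] at *
  obtain ⟨haA, hlt⟩ := ha
  have := (hy.1 a haA).2
  exact ⟨haA, show (x a + y a)/2 < q a by linarith⟩

/-- the union over all maximum circulations of the residual arc
sets equals the residual arc set of any strong maximum circulation, and hence
the induced strong partial order (transitive closure) is unique. -/
theorem strong_partial_order_unique
    {V : Type*} [Fintype V] [DecidableEq V]
    (A : Finset (V × V)) (q : V × V → ℝ)
    (hqpos : ∀ a ∈ A, 0 < q a) (x : V × V → ℝ)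
    (hx : IsStrongMaxCirculation A q x) :
    (↑(unsat A q x) : Set (V × V))
      = {a | a ∈ A ∧ ∃ y, IsMaxCirculation A q y ∧ y a < q a} ∧
    ∀ x', IsStrongMaxCirculation A q x' →
      ∀ i j : V, Relation.TransGen (residRel A q x) i j ↔
                 Relation.TransGen (residRel A q x') i j := by
  have key : ∀ z : V × V → ℝ, IsStrongMaxCirculation A q z →
      (↑(unsat A q z) : Set (V × V))
        = {a | a ∈ A ∧ ∃ y, IsMaxCirculation A q y ∧ y a < q a} := by
    intro z hz
    ext a
    simp only [unsat, Finset.coe_filter, Set.mem_setOf_eq]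
    constructor
    · rintro ⟨ha, hlt⟩; exact ⟨ha, z, hz.1, hlt⟩
    · rintro ⟨ha, y, hy, hlt⟩
      refine ⟨ha, ?_⟩
      set w := fun a => (z a + y a) / 2 with hw
      have hwm : IsMaxCirculation A q w := avg_max A q z y hz.1 hy
      have hsub : unsat A q z ⊆ unsat A q w := avg_unsat A q z y hy.1
      have heq : unsat A q z = unsat A q w :=
        Finset.eq_of_subset_of_card_le hsub (hz.2 w hwm)
      have haw : a ∈ unsat A q w := by
        rw [unsat, Finset.mem_filter]
        have := (hz.1.1.1 a ha).2
        refine ⟨ha, ?_⟩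
        show (z a + y a) / 2 < q a
        linarith
      rw [← heq, unsat, Finset.mem_filter] at haw
      exact haw.2
  refine ⟨key x hx, fun x' hx' i j => ?_⟩
  have hrel : ∀ i j, residRel A q x i j ↔ residRel A q x' i j := by
    intro i j
    have h1 := key x hx
    have h2 := key x' hx'
    have : ((i, j) ∈ unsat A q x) ↔ ((i, j) ∈ unsat A q x') := by
      constructor <;> intro h
      · have : ((i, j) : V × V) ∈ (↑(unsat A q x') : Set (V × V)) := by
          rw [h2, ← h1]; exact h
        exact this
      · have : ((i, j) : V × V) ∈ (↑(unsat A q x) : Set (V × V)) := by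
          rw [h1, ← h2]; exact h
        exact this
    simpa [residRel, unsat, Finset.mem_filter] using this
  constructor <;> intro h
  · exact Relation.TransGen.mono (fun a b => (hrel a b).1) _ _ h
  · exact Relation.TransGen.mono (fun a b => (hrel a b).2) _ _ h
end
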